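/- arXiv:1704.01377 — 4 statements merged into one kernel-verified Lean document; each statement's English description precedes it below -/
import Mathlib

section
/- Let x_1, …, x_n be real numbers. For a permutation σ of {1,…,n} set T_k^σ = x_{σ(1)} + ⋯ + x_{σ(k)} and M_n^σ = max(0, T_1^σ, …, T_n^σ). Then the sum over all permutations σ of {1,…,n} of M_n^σ equals the sum over all permutations σ of x_{σ(1)} multiplied by the number of indices k ∈ {1,…,n} with T_k^σ > 0; that is, Σ_{σ ∈ S_n} M_n^σ = Σ_{σ ∈ S_n} x_{σ(1)} · #{k : 1 ≤ k ≤ n, T_k^σ > 0}. -/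
open Finset

namespace HD

variable (m : ℕ) (w : ℕ → ℝ)

noncomputable def U (t : ℕ) : ℝ := ∑ i ∈ range t, w i

lemma U_succ (t : ℕ) : U w (t+1) = U w t + w t := sum_range_succ _ _

noncomputable def F (hm : 0 < m) (j : ℕ) : ℝ :=
  (range m).sup' (nonempty_range_iff.mpr hm.ne') (fun i => U w (j + i))

lemma U_add (hw : ∀ i, w (i + m) = w i) (t : ℕ) : U w (t + m) = U w t + U w m := by
  induction t with
  | zero => simp [U]
  | succ t ih =>
      rw [show t + 1 + m = (t + m) + 1 by omega, U_succ, ih, hw, U_succ]; ring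

lemma le_F (hm : 0 < m) (j : ℕ) : U w j ≤ F m w hm j := by
  have := le_sup' (f := fun i => U w (j + i)) (b := 0) (mem_range.mpr hm)
  rw [F]; simpa only [add_zero] using this

lemma le_F' (hm : 0 < m) (j : ℕ) : U w (j + m) ≤ F m w hm (j + 1) := by
  have h : m - 1 ∈ range m := mem_range.mpr (by omega)
  have := le_sup' (f := fun i => U w (j + 1 + i)) h
  rw [F]
  simpa only [show j + 1 + (m - 1) = j + m by omega] using this

lemma F_succ (hm : 0 < m) (hw : ∀ i, w (i + m) = w i) (hS : 0 < U w m) (j : ℕ) :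
    F m w hm (j + 1) = max (F m w hm j) (U w (j + m)) := by
  apply le_antisymm
  · rw [F]
    apply sup'_le
    intro i hi
    rcases eq_or_lt_of_le (Nat.succ_le_of_lt (mem_range.mp hi)) with h | h
    · rw [show j + 1 + i = j + m by omega]
      exact le_max_right _ _
    · refine le_trans ?_ (le_max_left _ (U w (j + m)))
      rw [F]
      have := le_sup' (f := fun i => U w (j + i)) (b := i + 1) (mem_range.mpr (show i + 1 < m by omega))
      simpa only [show j + (i + 1) = j + 1 + i by omega] using this
  · apply max_le
    · rw [F]
      apply sup'_le
      intro i hi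
      rcases Nat.eq_zero_or_pos i with h | h
      · subst h
        calc U w (j + 0) = U w j := by norm_num
          _ ≤ U w (j + m) := by
              rw [U_add m w hw j]; linarith
          _ ≤ F m w hm (j + 1) := le_F' m w hm j
      · have hi' := mem_range.mp hi
        refine le_trans ?_ (le_sup' (f := fun i' => U w (j + 1 + i')) (b := i - 1)
          (mem_range.mpr (show i - 1 < m by omega)))
        simp [show j + 1 + (i - 1) = j + i by omega]
    · exact le_F' m w hm j

lemma F_add (hm : 0 < m) (hw : ∀ i, w (i + m) = w i) :
    F m w hm m = F m w hm 0 + U w m := by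
  rw [F, F]
  apply le_antisymm
  · apply sup'_le
    intro i hi
    have : U w (m + i) = U w (0 + i) + U w m := by
      rw [show m + i = i + m by omega, U_add m w hw, zero_add]
    rw [this]
    exact add_le_add (le_sup' (fun i => U w (0 + i)) hi) le_rfl
  · obtain ⟨i, hi, hEq⟩ := Finset.exists_mem_eq_sup' (s := range m)
      (nonempty_range_iff.mpr hm.ne') (fun i => U w (0 + i))
    rw [hEq]
    have : U w (0 + i) + U w m = U w (m + i) := by
      rw [show m + i = i + m by omega, U_add m w hw, zero_add]
    rw [this]
    exact le_sup' (fun i => U w (m + i)) hi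

lemma cycle (hm : 0 < m) (hw : ∀ i, w (i + m) = w i) :
    ∑ j ∈ range m, max 0 (U w (j + m) - F m w hm j) = max 0 (U w m) := by
  rcases le_or_gt (U w m) 0 with hS | hS
  · rw [max_eq_left hS]
    apply Finset.sum_eq_zero
    intro j _
    have h1 : U w (j + m) ≤ F m w hm j := by
      rw [U_add m w hw]
      calc U w j + U w m ≤ U w j := by linarith
        _ ≤ F m w hm j := le_F m w hm j
    rw [max_eq_left (by linarith)]
  · have key : ∀ j, max 0 (U w (j + m) - F m w hm j) = F m w hm (j + 1) - F m w hm j := by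
      intro j
      rw [F_succ m w hm hw hS j]
      rcases le_total (U w (j + m)) (F m w hm j) with h | h
      · rw [max_eq_left h, max_eq_left (by linarith)]; ring
      · rw [max_eq_right h, max_eq_right (by linarith)]
    calc ∑ j ∈ range m, max 0 (U w (j + m) - F m w hm j)
        = ∑ j ∈ range m, (F m w hm (j + 1) - F m w hm j) := by
          exact Finset.sum_congr rfl fun j _ => key j
      _ = F m w hm m - F m w hm 0 := Finset.sum_range_sub _ _
      _ = U w m := by rw [F_add m w hm hw]; ring
      _ = max 0 (U w m) := (max_eq_right hS.le).symm

variable {n : ℕ} (x : Fin n → ℝ)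

noncomputable def xe (σ : Equiv.Perm (Fin n)) : ℕ → ℝ :=
  fun i => if h : i < n then x (σ ⟨i, h⟩) else 0

noncomputable def P (σ : Equiv.Perm (Fin n)) (t : ℕ) : ℝ :=
  (range (t + 1)).sup' (nonempty_range_iff.mpr (Nat.succ_ne_zero t)) (U (xe x σ))

noncomputable def Tk (σ : Equiv.Perm (Fin n)) (k : Fin n) : ℝ :=
  ∑ i ∈ univ.filter (fun i : Fin n => i ≤ k), x (σ i)

lemma filter_le_eq (k : Fin n) : univ.filter (fun i : Fin n => i ≤ k) = Finset.Iic k := by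
  ext i; simp

lemma card_le (k : Fin n) : (univ.filter (fun i : Fin n => i ≤ k)).card = k.val + 1 := by
  rw [filter_le_eq, Fin.card_Iic]

lemma T_eq (σ : Equiv.Perm (Fin n)) (k : Fin n) :
    Tk x σ k = U (xe x σ) (k.val + 1) := by
  rw [Tk, U]
  refine Finset.sum_nbij' (fun i => i.val) (fun j => if h : j < n then ⟨j, h⟩ else k)
    ?_ ?_ ?_ ?_ ?_
  · intro a ha
    simp only [mem_filter, mem_univ, true_and] at ha
    exact mem_range.mpr (by omega : a.val < k.val + 1)
  · intro a ha
    have ha' := mem_range.mp ha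
    have h : a < n := by omega
    simp only [dif_pos h, mem_filter, mem_univ, true_and]
    exact Fin.mk_le_of_le_val (by omega)
  · intro a ha
    simp
  · intro a ha
    have ha' := mem_range.mp ha
    simp [show a < n by omega]
  · intro a ha
    simp only [mem_filter, mem_univ, true_and] at ha
    rw [xe]
    simp [a.isLt]

lemma U_succ' (w : ℕ → ℝ) (t : ℕ) : U w (t+1) = U w t + w t := sum_range_succ _ _

lemma U_zero (w : ℕ → ℝ) : U w 0 = 0 := by simp [U]

lemma P_zero (σ : Equiv.Perm (Fin n)) : P x σ 0 = 0 := by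
  rw [P]
  simp [U_zero]

lemma P_succ (σ : Equiv.Perm (Fin n)) (t : ℕ) :
    P x σ (t + 1) = max (P x σ t) (U (xe x σ) (t + 1)) := by
  rw [P, P]
  have h1 : (range (t + 1 + 1)).sup' (nonempty_range_iff.mpr (Nat.succ_ne_zero (t+1)))
        (U (xe x σ))
      = (insert (t+1) (range (t+1))).sup' (insert_nonempty _ _) (U (xe x σ)) :=
    Finset.sup'_congr _ range_add_one (fun _ _ => rfl)
  rw [h1, sup'_insert, max_comm]

noncomputable def g (k : Fin n) (σ : Equiv.Perm (Fin n)) : ℝ :=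
  max 0 (U (xe x σ) (k.val + 1) - P x σ k.val)

lemma P_step (σ : Equiv.Perm (Fin n)) (t : ℕ) :
    P x σ (t + 1) - P x σ t = max 0 (U (xe x σ) (t + 1) - P x σ t) := by
  rw [P_succ]
  rcases le_total (U (xe x σ) (t + 1)) (P x σ t) with h | h
  · rw [max_eq_left h, max_eq_left (by linarith)]; ring
  · rw [max_eq_right h, max_eq_right (by linarith)]

lemma telescope (σ : Equiv.Perm (Fin n)) :
    P x σ n = ∑ k : Fin n, g x k σ := by
  have h1 : ∑ k : Fin n, g x k σ
      = ∑ t ∈ range n, max 0 (U (xe x σ) (t + 1) - P x σ t) :=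
    Fin.sum_univ_eq_sum_range (fun t => max 0 (U (xe x σ) (t + 1) - P x σ t)) n
  rw [h1]
  have h2 : ∀ t ∈ range n, max 0 (U (xe x σ) (t + 1) - P x σ t)
      = P x σ (t + 1) - P x σ t := fun t _ => (P_step x σ t).symm
  rw [Finset.sum_congr rfl h2, Finset.sum_range_sub, P_zero]
  ring

lemma M_eq (hn : 0 < n) (σ : Equiv.Perm (Fin n)) :
    max 0 ((univ : Finset (Fin n)).sup' (Finset.univ_nonempty_iff.mpr ⟨⟨0, hn⟩⟩)
      (fun k : Fin n => Tk x σ k)) = P x σ n := by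
  apply le_antisymm
  · apply max_le
    · rw [P]
      have := le_sup' (U (xe x σ)) (mem_range.mpr (Nat.succ_pos n))
      rw [U_zero] at this
      exact this
    · apply sup'_le
      intro k _
      rw [T_eq, P]
      exact le_sup' (U (xe x σ)) (mem_range.mpr (by omega : k.val + 1 < n + 1))
  · rw [P]
    apply sup'_le
    intro s hs
    have hs' := mem_range.mp hs
    rcases Nat.eq_zero_or_pos s with h | h
    · subst h
      rw [U_zero]
      exact le_max_left _ _
    · refine le_trans ?_ (le_max_right _ _)
      have hk : s - 1 < n := by omega
      have := le_sup' (f := fun k : Fin n => Tk x σ k) (b := ⟨s - 1, hk⟩) (mem_univ _)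
      rw [T_eq] at this
      simpa only [show s - 1 + 1 = s by omega] using this

def rot (n m j : ℕ) (hm : m ≤ n) (hj : j < m) : Equiv.Perm (Fin n) where
  toFun i := if h : i.val < m then ⟨(i.val + j) % m, lt_of_lt_of_le (Nat.mod_lt _ (by omega)) hm⟩ else i
  invFun i := if h : i.val < m then ⟨(i.val + (m - j)) % m, lt_of_lt_of_le (Nat.mod_lt _ (by omega)) hm⟩ else i
  left_inv := by
    intro i
    by_cases h : i.val < m
    · simp only [dif_pos h]
      have h2 : (i.val + j) % m < m := Nat.mod_lt _ (by omega)
      simp only [dif_pos h2]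
      apply Fin.ext
      simp only
      rw [Nat.mod_add_mod, show i.val + j + (m - j) = i.val + m by omega,
        Nat.add_mod_right, Nat.mod_eq_of_lt h]
    · simp only [dif_neg h]
  right_inv := by
    intro i
    by_cases h : i.val < m
    · simp only [dif_pos h]
      have h2 : (i.val + (m - j)) % m < m := Nat.mod_lt _ (by omega)
      simp only [dif_pos h2]
      apply Fin.ext
      simp only
      rw [Nat.mod_add_mod, show i.val + (m - j) + j = i.val + m by omega,
        Nat.add_mod_right, Nat.mod_eq_of_lt h]
    · simp only [dif_neg h]

lemma rot_apply (n m j : ℕ) (hm : m ≤ n) (hj : j < m) (t : ℕ) (ht : t < m) :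
    rot n m j hm hj ⟨t, lt_of_lt_of_le ht hm⟩
      = ⟨(t + j) % m, lt_of_lt_of_le (Nat.mod_lt _ (by omega)) hm⟩ := by
  show (if h : t < m then _ else _) = _
  rw [dif_pos ht]

lemma sup'_sub_const {ι : Type*} (s : Finset ι) (hs : s.Nonempty) (f : ι → ℝ) (c : ℝ) :
    s.sup' hs (fun i => f i - c) = s.sup' hs f - c := by
  apply le_antisymm
  · exact sup'_le _ _ fun i hi => sub_le_sub_right (le_sup' f hi) c
  · obtain ⟨i, hi, hEq⟩ := exists_mem_eq_sup' hs f
    rw [hEq, sub_le_iff_le_add]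
    have := le_sup' (fun i => f i - c) hi
    linarith

lemma U_rot (σ : Equiv.Perm (Fin n)) (k : Fin n) (j : ℕ) (hj : j < k.val + 1)
    (hm : k.val + 1 ≤ n) (t : ℕ) (ht : t ≤ k.val + 1) :
    U (xe x (σ * rot n (k.val + 1) j hm hj)) t
      = U (fun i => xe x σ (i % (k.val + 1))) (j + t)
        - U (fun i => xe x σ (i % (k.val + 1))) j := by
  set m := k.val + 1 with hmdef
  induction t with
  | zero => simp [U_zero]
  | succ t ih =>
      have ht' : t < m := ht
      rw [U_succ', ih (by omega), show j + (t + 1) = (j + t) + 1 by omega, U_succ']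
      have hxe : xe x (σ * rot n m j hm hj) t = xe x σ ((j + t) % m) := by
        rw [xe, xe]
        have h1 : t < n := by omega
        have h2 : (j + t) % m < n := by
          have := Nat.mod_lt (j + t) (show 0 < m by omega)
          omega
        rw [dif_pos h1, dif_pos h2]
        have : (⟨t, h1⟩ : Fin n) = ⟨t, lt_of_lt_of_le ht' hm⟩ := rfl
        rw [Equiv.Perm.mul_apply, this, rot_apply n m j hm hj t ht']
        congr 1
        apply congrArg
        apply Fin.ext
        simp [Nat.add_comm t j]
      rw [hxe]
      ring

lemma P_rot (σ : Equiv.Perm (Fin n)) (k : Fin n) (j : ℕ) (hj : j < k.val + 1)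
    (hm : k.val + 1 ≤ n) :
    P x (σ * rot n (k.val + 1) j hm hj) k.val
      = F (k.val + 1) (fun i => xe x σ (i % (k.val + 1))) (by omega) j
        - U (fun i => xe x σ (i % (k.val + 1))) j := by
  set m := k.val + 1 with hmdef
  set w := fun i => xe x σ (i % m) with hwdef
  rw [P, F, ← sup'_sub_const]
  apply Finset.sup'_congr _ rfl
  intro s hs
  have hs' := mem_range.mp hs
  exact U_rot x σ k j hj hm s (by omega)

lemma g_rot (σ : Equiv.Perm (Fin n)) (k : Fin n) (j : ℕ) (hj : j < k.val + 1)
    (hm : k.val + 1 ≤ n) :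
    g x k (σ * rot n (k.val + 1) j hm hj)
      = max 0 (U (fun i => xe x σ (i % (k.val + 1))) (j + (k.val + 1))
          - F (k.val + 1) (fun i => xe x σ (i % (k.val + 1))) (by omega) j) := by
  rw [g, U_rot x σ k j hj hm (k.val + 1) le_rfl, P_rot x σ k j hj hm]
  congr 1
  ring

lemma U_mod_eq (σ : Equiv.Perm (Fin n)) (m : ℕ) :
    U (fun i => xe x σ (i % m)) m = U (xe x σ) m := by
  rw [U, U]
  exact Finset.sum_congr rfl fun i hi => by rw [Nat.mod_eq_of_lt (mem_range.mp hi)]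

lemma stepB (k : Fin n) :
    ((k.val + 1 : ℕ) : ℝ) * ∑ σ : Equiv.Perm (Fin n), g x k σ
      = ∑ σ : Equiv.Perm (Fin n), max 0 (U (xe x σ) (k.val + 1)) := by
  set m := k.val + 1 with hmdef
  have hm : m ≤ n := k.isLt
  have hm0 : 0 < m := Nat.succ_pos _
  calc ((m : ℕ) : ℝ) * ∑ σ : Equiv.Perm (Fin n), g x k σ
      = ∑ _j ∈ range m, ∑ σ : Equiv.Perm (Fin n), g x k σ := by
        rw [Finset.sum_const, card_range, nsmul_eq_mul]
    _ = ∑ j ∈ range m, ∑ σ : Equiv.Perm (Fin n),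
          max 0 (U (fun i => xe x σ (i % m)) (j + m)
            - F m (fun i => xe x σ (i % m)) hm0 j) := by
        apply Finset.sum_congr rfl
        intro j hj
        have hj' := mem_range.mp hj
        rw [← Equiv.sum_comp (Equiv.mulRight (rot n m j hm hj')) (g x k)]
        apply Finset.sum_congr rfl
        intro σ _
        exact g_rot x σ k j hj' hm
    _ = ∑ σ : Equiv.Perm (Fin n), ∑ j ∈ range m,
          max 0 (U (fun i => xe x σ (i % m)) (j + m)
            - F m (fun i => xe x σ (i % m)) hm0 j) := Finset.sum_comm
    _ = ∑ σ : Equiv.Perm (Fin n), max 0 (U (xe x σ) m) := by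
        apply Finset.sum_congr rfl
        intro σ _
        rw [cycle m (fun i => xe x σ (i % m)) hm0
          (fun i => by simp [Nat.add_mod_right]), U_mod_eq]

lemma Tk_mul_swap (σ : Equiv.Perm (Fin n)) (k a b : Fin n) (ha : a ≤ k) (hb : b ≤ k) :
    Tk x (σ * Equiv.swap a b) k = Tk x σ k := by
  rw [Tk, Tk]
  have hmem : ∀ i : Fin n, i ∈ univ.filter (fun i : Fin n => i ≤ k) →
      Equiv.swap a b i ∈ univ.filter (fun i : Fin n => i ≤ k) := by
    intro i hi
    simp only [mem_filter, mem_univ, true_and] at hi ⊢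
    rw [Equiv.swap_apply_def]
    split_ifs <;> assumption
  refine Finset.sum_nbij' (fun i => Equiv.swap a b i) (fun i => Equiv.swap a b i)
    hmem hmem (fun i _ => Equiv.swap_apply_self a b i) (fun i _ => Equiv.swap_apply_self a b i)
    (fun i _ => rfl)

lemma stepC (hn : 0 < n) (k : Fin n) :
    ((k.val + 1 : ℕ) : ℝ) * ∑ σ : Equiv.Perm (Fin n),
        (if 0 < Tk x σ k then x (σ ⟨0, hn⟩) else 0)
      = ∑ σ : Equiv.Perm (Fin n), max 0 (Tk x σ k) := by
  have h0k : (⟨0, hn⟩ : Fin n) ≤ k := Fin.mk_le_of_le_val (Nat.zero_le _)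
  calc ((k.val + 1 : ℕ) : ℝ) * ∑ σ : Equiv.Perm (Fin n),
        (if 0 < Tk x σ k then x (σ ⟨0, hn⟩) else 0)
      = ∑ _i ∈ univ.filter (fun i : Fin n => i ≤ k), ∑ σ : Equiv.Perm (Fin n),
          (if 0 < Tk x σ k then x (σ ⟨0, hn⟩) else 0) := by
        rw [Finset.sum_const, card_le, nsmul_eq_mul]
    _ = ∑ i ∈ univ.filter (fun i : Fin n => i ≤ k), ∑ σ : Equiv.Perm (Fin n),
          (if 0 < Tk x σ k then x (σ i) else 0) := by
        apply Finset.sum_congr rfl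
        intro i hi
        have hik : i ≤ k := by simpa using hi
        rw [← Equiv.sum_comp (Equiv.mulRight (Equiv.swap (⟨0, hn⟩ : Fin n) i))
          (fun σ => if 0 < Tk x σ k then x (σ ⟨0, hn⟩) else 0)]
        apply Finset.sum_congr rfl
        intro σ _
        simp only [Equiv.coe_mulRight]
        simp only [Tk_mul_swap x σ k _ _ h0k hik, Equiv.Perm.mul_apply, Equiv.swap_apply_left]
    _ = ∑ σ : Equiv.Perm (Fin n), ∑ i ∈ univ.filter (fun i : Fin n => i ≤ k),
          (if 0 < Tk x σ k then x (σ i) else 0) := Finset.sum_comm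
    _ = ∑ σ : Equiv.Perm (Fin n), max 0 (Tk x σ k) := by
        apply Finset.sum_congr rfl
        intro σ _
        by_cases h : 0 < Tk x σ k
        · simp only [if_pos h]
          rw [← Tk, max_eq_right h.le]
        · simp only [if_neg h]
          rw [Finset.sum_const_zero, max_eq_left (not_lt.mp h)]

end HD

/-- Lemma of Hunt/Kac/Dyson: for real numbers `x 0, …, x (n-1)` and a permutation `σ`,
with `T k σ = x (σ 0) + ⋯ + x (σ k)` and `M σ = max (0, T 0 σ, …, T (n-1) σ)`,
we have `∑ σ, M σ = ∑ σ, x (σ 0) * #{k : T k σ > 0}`. -/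
theorem sum_perm_max_eq_sum_first_mul_card_pos (n : ℕ) (hn : 0 < n) (x : Fin n → ℝ) :
    ∑ σ : Equiv.Perm (Fin n),
        max 0
          (Finset.univ.sup' (Finset.univ_nonempty_iff.mpr ⟨⟨0, hn⟩⟩)
            (fun k : Fin n => ∑ i ∈ Finset.univ.filter (fun i : Fin n => i ≤ k), x (σ i)))
      = ∑ σ : Equiv.Perm (Fin n),
          x (σ ⟨0, hn⟩) *
            ((Finset.univ.filter (fun k : Fin n =>
                0 < ∑ i ∈ Finset.univ.filter (fun i : Fin n => i ≤ k), x (σ i))).card : ℝ) := by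
  have key : ∀ k : Fin n, ∑ σ : Equiv.Perm (Fin n), HD.g x k σ
      = ∑ σ : Equiv.Perm (Fin n), (if 0 < HD.Tk x σ k then x (σ ⟨0, hn⟩) else 0) := by
    intro k
    apply mul_left_cancel₀
      (show ((k.val + 1 : ℕ) : ℝ) ≠ 0 from Nat.cast_ne_zero.mpr (Nat.succ_ne_zero _))
    rw [HD.stepB, HD.stepC x hn k]
    apply Finset.sum_congr rfl
    intro σ _
    rw [HD.T_eq]
  calc ∑ σ : Equiv.Perm (Fin n),
        max 0
          (Finset.univ.sup' (Finset.univ_nonempty_iff.mpr ⟨⟨0, hn⟩⟩)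
            (fun k : Fin n => ∑ i ∈ Finset.univ.filter (fun i : Fin n => i ≤ k), x (σ i)))
      = ∑ σ : Equiv.Perm (Fin n), HD.P x σ n :=
        Finset.sum_congr rfl (fun σ _ => HD.M_eq x hn σ)
    _ = ∑ σ : Equiv.Perm (Fin n), ∑ k : Fin n, HD.g x k σ :=
        Finset.sum_congr rfl (fun σ _ => HD.telescope x σ)
    _ = ∑ k : Fin n, ∑ σ : Equiv.Perm (Fin n), HD.g x k σ := Finset.sum_comm
    _ = ∑ k : Fin n, ∑ σ : Equiv.Perm (Fin n),
          (if 0 < HD.Tk x σ k then x (σ ⟨0, hn⟩) else 0) :=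
        Finset.sum_congr rfl (fun k _ => key k)
    _ = ∑ σ : Equiv.Perm (Fin n), ∑ k : Fin n,
          (if 0 < HD.Tk x σ k then x (σ ⟨0, hn⟩) else 0) := Finset.sum_comm
    _ = ∑ σ : Equiv.Perm (Fin n),
          x (σ ⟨0, hn⟩) *
            ((Finset.univ.filter (fun k : Fin n =>
                0 < ∑ i ∈ Finset.univ.filter (fun i : Fin n => i ≤ k), x (σ i))).card : ℝ) := by
        apply Finset.sum_congr rfl
        intro σ _
        rw [← Finset.sum_filter, Finset.sum_const, nsmul_eq_mul, mul_comm]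
        rfl
end

section
/- Let X_1, X_2, … be independent, identically distributed real-valued random variables with E|X_1| < ∞. Set T_k = X_1 + ⋯ + X_k and M_n = max(0, T_1, …, T_n). Then for every n ≥ 1, E[M_n] = Σ_{k=1}^n E[T_k⁺]/k, where x⁺ = max(x,0). -/
open MeasureTheory ProbabilityTheory Finset

open Finset

namespace SpitzerAux

variable (x : ℕ → ℝ) (n : ℕ)

/-- Partial sums of the `n`-periodized sequence. -/
def pT (m : ℕ) : ℝ := ∑ i ∈ Finset.range m, x (i % n)

lemma pT_succ (m : ℕ) : pT x n (m + 1) = pT x n m + x (m % n) :=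
  Finset.sum_range_succ _ _

lemma pT_add (m : ℕ) : pT x n (m + n) = pT x n m + pT x n n := by
  induction m with
  | zero => simp [pT]
  | succ m ih =>
    have h1 : m + 1 + n = (m + n) + 1 := by omega
    rw [h1, pT_succ, ih, pT_succ, Nat.add_mod_right]
    ring

/-- shifted partial sums in terms of `pT`. -/
lemma shift_sum (j k : ℕ) :
    ∑ i ∈ Finset.range k, x ((j + i) % n) = pT x n (j + k) - pT x n j := by
  induction k with
  | zero => simp
  | succ k ih =>
    rw [Finset.sum_range_succ, ih, ← Nat.add_assoc, pT_succ]
    ring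

/-- window sup: `max over m ∈ [j, j+r]` of `pT`. -/
def W (j r : ℕ) : ℝ :=
  (Finset.range (r + 1)).sup' Finset.nonempty_range_add_one (fun k => pT x n (j + k))

lemma W_zero (j : ℕ) : W x n j 0 = pT x n j := by simp [W]

lemma W_back (j r : ℕ) : W x n j (r + 1) = W x n j r ⊔ pT x n (j + r + 1) := by
  apply le_antisymm
  · apply Finset.sup'_le
    intro k hk
    simp only [Finset.mem_range] at hk
    rcases le_or_gt k r with h | h
    · exact le_sup_of_le_left
        (Finset.le_sup'_of_le _ (b := k) (by simp only [Finset.mem_range]; omega) le_rfl)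
    · have hk1 : k = r + 1 := by omega
      subst hk1
      have : j + (r + 1) = j + r + 1 := by omega
      rw [this]
      exact le_sup_right
  · apply sup_le
    · exact Finset.sup'_mono _ (Finset.range_subset_range.mpr (by omega)) _
    · refine Finset.le_sup'_of_le _ (b := r + 1) (by simp only [Finset.mem_range]; omega) ?_
      have : j + (r + 1) = j + r + 1 := by omega
      rw [this]

lemma W_front (j r : ℕ) : W x n j (r + 1) = pT x n j ⊔ W x n (j + 1) r := by
  apply le_antisymm
  · apply Finset.sup'_le
    intro k hk
    rcases Nat.eq_zero_or_pos k with rfl | hk0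
    · simp
    · refine le_sup_of_le_right (Finset.le_sup'_of_le _ (b := k - 1) ?_ ?_)
      · simp only [Finset.mem_range] at hk ⊢; omega
      · have : j + 1 + (k - 1) = j + k := by omega
        rw [this]
  · apply sup_le
    · exact Finset.le_sup'_of_le _ (b := 0) (by simp) (by simp)
    · apply Finset.sup'_le
      intro k hk
      refine Finset.le_sup'_of_le _ (b := k + 1) ?_ ?_
      · simp only [Finset.mem_range] at hk ⊢; omega
      · have : j + (k + 1) = j + 1 + k := by omega
        rw [this]

/-- With nonnegative total sum, a window of length `≥ n` has the same sup as the full prefix. -/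
lemma W_eq_prefix (hn : 0 < n) (hs : 0 ≤ pT x n n) (r : ℕ) (hr : n ≤ r + 1) (j : ℕ) :
    W x n j r = W x n 0 (j + r) := by
  induction j with
  | zero => simp
  | succ j ih =>
    have h1 : j + 1 + r = (j + r) + 1 := by omega
    rw [h1, W_back, ih.symm]
    have h2 : 0 + (j + r) + 1 = j + r + 1 := by omega
    rw [h2]
    -- W j r ⊔ pT (j + r + 1) = W j (r+1) = pT j ⊔ W (j+1) r, and pT j ≤ W (j+1) r
    have h3 : W x n j r ⊔ pT x n (j + r + 1) = pT x n j ⊔ W x n (j + 1) r := by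
      rw [← W_back, W_front]
    rw [h3]
    rw [sup_eq_right.mpr]
    calc pT x n j ≤ pT x n j + pT x n n := by linarith
    _ = pT x n (j + n) := (pT_add x n j).symm
    _ ≤ W x n (j + 1) r := by
        refine Finset.le_sup'_of_le _ (b := n - 1) ?_ ?_
        · simp only [Finset.mem_range]; omega
        · have : j + 1 + (n - 1) = j + n := by omega
          rw [this]

lemma W_prefix_add (m : ℕ) (hs : 0 ≤ pT x (m + 1) (m + 1)) :
    W x (m + 1) 0 (2 * m + 1) = W x (m + 1) 0 m + pT x (m + 1) (m + 1) := by
  set n := m + 1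
  apply le_antisymm
  · apply Finset.sup'_le
    intro k hk
    simp only [Finset.mem_range] at hk
    rcases le_or_gt k m with h | h
    · have : pT x n (0 + k) ≤ W x n 0 m :=
        Finset.le_sup'_of_le _ (b := k) (by simp only [Finset.mem_range]; omega) le_rfl
      linarith
    · have hk2 : k = (k - n) + n := by omega
      rw [hk2]
      have : pT x n (0 + ((k - n) + n)) = pT x n (0 + (k - n)) + pT x n n := by
        rw [← Nat.add_assoc]; exact pT_add x n _
      rw [this]
      have : pT x n (0 + (k - n)) ≤ W x n 0 m :=
        Finset.le_sup'_of_le _ (b := k - n) (by simp only [Finset.mem_range]; omega) le_rfl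
      linarith
  · have key : W x n 0 m ≤ W x n 0 (2 * m + 1) - pT x n n := by
      apply Finset.sup'_le
      intro k hk
      simp only [Finset.mem_range] at hk
      rw [le_sub_iff_add_le]
      have h1 : pT x n (0 + k) + pT x n n = pT x n (0 + (k + n)) := by
        rw [← Nat.add_assoc]; exact (pT_add x n (0 + k)).symm
      rw [h1]
      exact Finset.le_sup'_of_le _ (b := k + n) (by simp only [Finset.mem_range]; omega) le_rfl
    linarith

/-- The deterministic cycle lemma. -/
lemma cycle (hn : 0 < n) :
    ∑ j ∈ Finset.range n,
      (((Finset.range (n + 1)).sup' Finset.nonempty_range_add_one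
          (fun k => ∑ i ∈ Finset.range k, x ((j + i) % n)))
        - ((Finset.range n).sup' (Finset.nonempty_range_iff.mpr hn.ne')
          (fun k => ∑ i ∈ Finset.range k, x ((j + i) % n))))
    = max (pT x n n) 0 := by
  obtain ⟨m, rfl⟩ : ∃ m, n = m + 1 := ⟨n - 1, by omega⟩
  set n := m + 1 with hn_def
  set s := pT x n n with hs_def
  -- rewrite both sup's through pT
  have hterm : ∀ j : ℕ,
      ((Finset.range (n + 1)).sup' Finset.nonempty_range_add_one
          (fun k => ∑ i ∈ Finset.range k, x ((j + i) % n)))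
        - ((Finset.range n).sup' (Finset.nonempty_range_iff.mpr hn.ne')
          (fun k => ∑ i ∈ Finset.range k, x ((j + i) % n)))
      = W x n j n - W x n j m := by
    intro j
    have e1 : ∀ (N : ℕ) (hN : (Finset.range (N+1)).Nonempty),
        (Finset.range (N + 1)).sup' hN (fun k => ∑ i ∈ Finset.range k, x ((j + i) % n))
          = W x n j N - pT x n j := by
      intro N hN
      rw [W]
      have : ∀ k, (∑ i ∈ Finset.range k, x ((j + i) % n)) = pT x n (j + k) - pT x n j :=
        fun k => shift_sum x n j k
      rw [Finset.sup'_congr hN rfl (fun k _ => this k)]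
      exact (Finset.comp_sup'_eq_sup'_comp hN (fun t => t - pT x n j)
        (fun a b => (max_sub_sub_right a b _).symm)).symm
    have e2 : (Finset.range n).sup' (Finset.nonempty_range_iff.mpr hn.ne')
          (fun k => ∑ i ∈ Finset.range k, x ((j + i) % n)) = W x n j m - pT x n j := by
      have : n = m + 1 := rfl
      exact e1 m _
    rw [e1 (m+1) _, e2]
    ring
  rw [Finset.sum_congr rfl (fun j _ => hterm j)]
  rcases le_or_gt s 0 with hs | hs
  · -- all terms vanish
    have hz : ∀ j ∈ Finset.range n, W x n j n - W x n j m = 0 := by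
      intro j _
      have : W x n j n = W x n j m := by
        rw [show n = m + 1 from rfl, W_back]
        rw [sup_eq_left.mpr]
        calc pT x n (j + m + 1) = pT x n (j + n) := by rw [show j + m + 1 = j + n from rfl]
        _ = pT x n j + s := pT_add x n j
        _ ≤ pT x n j := by linarith
        _ ≤ W x n j m := Finset.le_sup'_of_le _ (b := 0) (by simp) (by simp)
      rw [this, sub_self]
    rw [Finset.sum_congr rfl hz]
    simp [max_eq_right hs]
  · -- positive sum: telescoping via prefix sups
    have hs' : (0:ℝ) ≤ s := le_of_lt hs
    have hterm2 : ∀ j ∈ Finset.range n,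
        W x n j n - W x n j m = W x n 0 ((j+1) + m) - W x n 0 (j + m) := by
      intro j _
      rw [W_eq_prefix x n hn hs' n (by omega) j, W_eq_prefix x n hn hs' m (by omega) j]
      have : j + n = (j + 1) + m := by omega
      rw [this]
    rw [Finset.sum_congr rfl hterm2]
    rw [Finset.sum_range_sub (fun j => W x n 0 (j + m))]
    have : n + m = 2 * m + 1 := by omega
    rw [this, W_prefix_add x m (by exact hs'), Nat.zero_add]
    simp [max_eq_left hs']
    exact add_sub_cancel_left _ _

variable {Ω : Type*} [MeasurableSpace Ω] {P : Measure Ω} [IsProbabilityMeasure P]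

lemma integrable_sup' {ι : Type*} (s : Finset ι) (H : s.Nonempty) (g : ι → Ω → ℝ)
    (hg : ∀ i ∈ s, Integrable (g i) P) :
    Integrable (fun ω => s.sup' H (fun i => g i ω)) P := by
  have h : (fun ω => s.sup' H (fun i => g i ω)) = s.sup' H g :=
    funext fun ω => (Finset.sup'_apply H g ω).symm
  rw [h]
  exact Finset.sup'_induction (p := fun f : Ω → ℝ => Integrable f P) H g (fun f hf g' hg' => hf.sup hg') hg

lemma measurable_sup'_fun {δ : Type*} [MeasurableSpace δ] {ι : Type*} (s : Finset ι)
    (H : s.Nonempty) (f : ι → δ → ℝ) (hf : ∀ i ∈ s, Measurable (f i)) :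
    Measurable (fun v => s.sup' H (fun i => f i v)) := by
  have h : (fun v => s.sup' H (fun i => f i v)) = s.sup' H f :=
    funext fun v => (Finset.sup'_apply H f v).symm
  rw [h]
  exact Finset.measurable_sup' H hf

/-- The joint law of `N` distinct coordinates of an i.i.d. sequence is the product measure. -/
lemma map_eq_pi {N : ℕ} (X : ℕ → Ω → ℝ)
    (hmeas : ∀ i, Measurable (X i))
    (hindep : iIndepFun X P)
    (hident : ∀ i, IdentDistrib (X i) (X 0) P P)
    (σ : Fin N → ℕ) (hσ : Function.Injective σ) :
    P.map (fun ω (i : Fin N) => X (σ i) ω) = Measure.pi (fun _ => P.map (X 0)) := by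
  haveI : IsProbabilityMeasure (P.map (X 0)) :=
    Measure.isProbabilityMeasure_map (hmeas 0).aemeasurable
  have hvec : Measurable (fun ω (i : Fin N) => X (σ i) ω) :=
    measurable_pi_lambda _ (fun i => hmeas (σ i))
  refine (Measure.pi_eq fun s hs => ?_).symm
  rw [Measure.map_apply hvec (MeasurableSet.univ_pi hs)]
  classical
  -- extend the sets to all of ℕ
  set sets : ℕ → Set ℝ := fun m => if h : ∃ i, σ i = m then s h.choose else Set.univ with hsets_def
  have hsets_at : ∀ i : Fin N, sets (σ i) = s i := by
    intro i
    have h : ∃ i', σ i' = σ i := ⟨i, rfl⟩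
    have hch : h.choose = i := hσ h.choose_spec
    simp only [hsets_def, dif_pos h, hch]
  have hsets_meas : ∀ m, MeasurableSet (sets m) := by
    intro m
    by_cases h : ∃ i, σ i = m
    · simp only [hsets_def, dif_pos h]; exact hs _
    · simp only [hsets_def, dif_neg h]; exact MeasurableSet.univ
  have hpre : (fun ω (i : Fin N) => X (σ i) ω) ⁻¹' Set.pi Set.univ s
      = ⋂ m ∈ Finset.image σ Finset.univ, X m ⁻¹' sets m := by
    ext ω
    simp only [Set.mem_preimage, Set.mem_pi, Set.mem_univ, forall_true_left, Set.mem_iInter,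
      Finset.mem_image, Finset.mem_univ, true_and]
    constructor
    · rintro h m ⟨i, rfl⟩
      rw [hsets_at i]; exact h i
    · intro h i
      have := h (σ i) ⟨i, rfl⟩
      rwa [hsets_at i] at this
  rw [hpre, hindep.measure_inter_preimage_eq_mul _ (fun m _ => hsets_meas m),
    Finset.prod_image (fun a _ b _ h => hσ h)]
  refine Finset.prod_congr rfl fun i _ => ?_
  rw [hsets_at i, ← Measure.map_apply (hmeas (σ i)) (hs i), (hident (σ i)).map_eq]

/-- The key recurrence: `E[M_{m+1}] = E[M_m] + E[T_{m+1}^+]/(m+1)`. -/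
lemma recurrence (X : ℕ → Ω → ℝ)
    (hmeas : ∀ i, Measurable (X i))
    (hindep : iIndepFun X P)
    (hident : ∀ i, IdentDistrib (X i) (X 0) P P)
    (hint : Integrable (X 0) P) (m : ℕ) :
    ∫ ω, (Finset.range (m + 2)).sup' Finset.nonempty_range_add_one
        (fun k => ∑ i ∈ Finset.range k, X i ω) ∂P
      = (∫ ω, (Finset.range (m + 1)).sup' Finset.nonempty_range_add_one
          (fun k => ∑ i ∈ Finset.range k, X i ω) ∂P)
        + (∫ ω, max (∑ i ∈ Finset.range (m + 1), X i ω) 0 ∂P) / ((m : ℝ) + 1) := by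
  classical
  set N := m + 1 with hNdef
  have hN : 0 < N := Nat.succ_pos m
  have hNne : (Finset.range N).Nonempty := Finset.nonempty_range_iff.mpr hN.ne'
  have hXint : ∀ i, Integrable (X i) P := fun i => (hident i).integrable_iff.mpr hint
  -- the shifted increments
  set g : ℕ → Ω → ℝ := fun j ω =>
      ((Finset.range (N + 1)).sup' Finset.nonempty_range_add_one
        (fun k => ∑ i ∈ Finset.range k, X ((j + i) % N) ω))
      - ((Finset.range N).sup' (Finset.nonempty_range_iff.mpr hN.ne')
        (fun k => ∑ i ∈ Finset.range k, X ((j + i) % N) ω)) with hgdef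
  -- (a) pointwise cycle lemma
  have hcycle : ∀ ω, ∑ j ∈ Finset.range N, g j ω = max (∑ i ∈ Finset.range N, X i ω) 0 := by
    intro ω
    have h := cycle (fun i => X i ω) N hN
    have hpt : pT (fun i => X i ω) N N = ∑ i ∈ Finset.range N, X i ω :=
      Finset.sum_congr rfl (fun i hi => by rw [Nat.mod_eq_of_lt (Finset.mem_range.mp hi)])
    rw [hpt] at h
    exact h
  -- (b) integrability
  have hgint : ∀ j, Integrable (g j) P := by
    intro j
    exact Integrable.sub
      (integrable_sup' _ _ _ (fun k _ => integrable_finset_sum _ fun i _ => hXint _))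
      (integrable_sup' _ _ _ (fun k _ => integrable_finset_sum _ fun i _ => hXint _))
  -- (c) all shifted increments have the same expectation
  set F : (Fin N → ℝ) → ℝ := fun v =>
      ((Finset.range (N + 1)).sup' Finset.nonempty_range_add_one
        (fun k => ∑ i ∈ Finset.range k, v ⟨i % N, Nat.mod_lt i hN⟩))
      - ((Finset.range N).sup' (Finset.nonempty_range_iff.mpr hN.ne')
        (fun k => ∑ i ∈ Finset.range k, v ⟨i % N, Nat.mod_lt i hN⟩)) with hFdef
  have hFmeas : Measurable F := by
    apply Measurable.sub
    · exact measurable_sup'_fun _ _ _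
        (fun k _ => Finset.measurable_sum _ fun i _ => measurable_pi_apply _)
    · exact measurable_sup'_fun _ _ _
        (fun k _ => Finset.measurable_sum _ fun i _ => measurable_pi_apply _)
  set vec : ℕ → Ω → (Fin N → ℝ) := fun j ω i => X ((j + i.val) % N) ω with hvecdef
  have hmod : ∀ j i : ℕ, (j + i % N) % N = (j + i) % N :=
    fun j i => Nat.ModEq.add_left j (Nat.mod_modEq i N)
  have hveceq : ∀ j, g j = fun ω => F (vec j ω) := by
    intro j
    funext ω
    simp only [hgdef, hFdef, hvecdef]
    congr 1
    · exact Finset.sup'_congr _ rfl (fun k _ => Finset.sum_congr rfl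
        (fun i _ => by rw [hmod j i]))
    · exact Finset.sup'_congr _ rfl (fun k _ => Finset.sum_congr rfl
        (fun i _ => by rw [hmod j i]))
  have hvecmeas : ∀ j, Measurable (vec j) :=
    fun j => measurable_pi_lambda _ fun i => hmeas _
  have hinj : ∀ j, Function.Injective (fun i : Fin N => (j + i.val) % N) := by
    intro j a b hab
    apply Fin.ext
    have h1 : a.val % N = b.val % N := Nat.ModEq.add_left_cancel' j hab
    rwa [Nat.mod_eq_of_lt a.isLt, Nat.mod_eq_of_lt b.isLt] at h1
  have hvecid : ∀ j, IdentDistrib (vec j) (vec 0) P P := by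
    intro j
    refine ⟨(hvecmeas j).aemeasurable, (hvecmeas 0).aemeasurable, ?_⟩
    rw [show vec j = (fun ω (i : Fin N) => X ((fun i : Fin N => (j + i.val) % N) i) ω) from rfl,
      show vec 0 = (fun ω (i : Fin N) => X ((fun i : Fin N => (0 + i.val) % N) i) ω) from rfl,
      map_eq_pi X hmeas hindep hident _ (hinj j),
      map_eq_pi X hmeas hindep hident _ (hinj 0)]
  have hIeq : ∀ j, ∫ ω, g j ω ∂P = ∫ ω, g 0 ω ∂P := by
    intro j
    rw [hveceq j, hveceq 0]
    exact ((hvecid j).comp hFmeas).integral_eq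
  -- (d) sum the expectations
  have hsum : ∑ j ∈ Finset.range N, ∫ ω, g j ω ∂P
      = ∫ ω, max (∑ i ∈ Finset.range N, X i ω) 0 ∂P := by
    rw [← integral_finset_sum _ (fun j _ => hgint j)]
    exact integral_congr_ae (Filter.Eventually.of_forall fun ω => hcycle ω)
  have hsum2 : ∑ j ∈ Finset.range N, ∫ ω, g j ω ∂P = (N : ℝ) * ∫ ω, g 0 ω ∂P := by
    rw [Finset.sum_congr rfl (fun j _ => hIeq j), Finset.sum_const, Finset.card_range,
      nsmul_eq_mul]
  -- (e) identify `g 0` with the difference of the two maxima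
  have hg0 : ∀ ω, g 0 ω =
      ((Finset.range (N + 1)).sup' Finset.nonempty_range_add_one
        (fun k => ∑ i ∈ Finset.range k, X i ω))
      - ((Finset.range N).sup' hNne (fun k => ∑ i ∈ Finset.range k, X i ω)) := by
    intro ω
    simp only [hgdef]
    congr 1
    · refine Finset.sup'_congr _ rfl (fun k hk => Finset.sum_congr rfl (fun i hi => ?_))
      rw [Nat.zero_add, Nat.mod_eq_of_lt]
      have := Finset.mem_range.mp hk
      have := Finset.mem_range.mp hi
      omega
    · refine Finset.sup'_congr _ rfl (fun k hk => Finset.sum_congr rfl (fun i hi => ?_))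
      rw [Nat.zero_add, Nat.mod_eq_of_lt]
      have := Finset.mem_range.mp hk
      have := Finset.mem_range.mp hi
      omega
  have hintA : Integrable (fun ω => (Finset.range (N + 1)).sup' Finset.nonempty_range_add_one
      (fun k => ∑ i ∈ Finset.range k, X i ω)) P :=
    integrable_sup' _ _ _ (fun k _ => integrable_finset_sum _ fun i _ => hXint _)
  have hintB : Integrable (fun ω => (Finset.range N).sup' hNne
      (fun k => ∑ i ∈ Finset.range k, X i ω)) P :=
    integrable_sup' _ _ _ (fun k _ => integrable_finset_sum _ fun i _ => hXint _)
  have hg0int : ∫ ω, g 0 ω ∂P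
      = (∫ ω, (Finset.range (N + 1)).sup' Finset.nonempty_range_add_one
          (fun k => ∑ i ∈ Finset.range k, X i ω) ∂P)
        - (∫ ω, (Finset.range N).sup' hNne
          (fun k => ∑ i ∈ Finset.range k, X i ω) ∂P) := by
    rw [integral_congr_ae (Filter.Eventually.of_forall hg0)]
    exact integral_sub hintA hintB
  -- (f) put everything together
  have hNR : ((N : ℝ)) ≠ 0 := by positivity
  have hmain : (N : ℝ) * (∫ ω, g 0 ω ∂P) = ∫ ω, max (∑ i ∈ Finset.range N, X i ω) 0 ∂P := by
    rw [← hsum2, hsum]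
  rw [hg0int] at hmain
  have hcast : ((N : ℝ)) = (m : ℝ) + 1 := by push_cast [hNdef]; ring
  rw [hcast] at hmain hNR
  have key2 : (∫ ω, (Finset.range (N + 1)).sup' Finset.nonempty_range_add_one
          (fun k => ∑ i ∈ Finset.range k, X i ω) ∂P)
      - (∫ ω, (Finset.range N).sup' hNne
          (fun k => ∑ i ∈ Finset.range k, X i ω) ∂P)
      = (∫ ω, max (∑ i ∈ Finset.range N, X i ω) 0 ∂P) / ((m : ℝ) + 1) := by
    rw [eq_div_iff hNR, mul_comm]
    exact hmain
  have key : (∫ ω, (Finset.range (N + 1)).sup' Finset.nonempty_range_add_one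
          (fun k => ∑ i ∈ Finset.range k, X i ω) ∂P)
      = (∫ ω, (Finset.range N).sup' hNne
          (fun k => ∑ i ∈ Finset.range k, X i ω) ∂P)
        + (∫ ω, max (∑ i ∈ Finset.range N, X i ω) 0 ∂P) / ((m : ℝ) + 1) := by
    linarith [key2]
  exact key

end SpitzerAux

open Finset

/-- For i.i.d. integrable real random variables `X 0, X 1, …` with partial sums
`T k = X 0 + ⋯ + X (k-1)` and `M n = max (0, T 1, …, T n)`, one has
`E[M n] = ∑_{k=1}^n E[T k⁺] / k`. -/
theorem expectation_max_partial_sums {Ω : Type*} [MeasurableSpace Ω]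
    (P : Measure Ω) [IsProbabilityMeasure P]
    (X : ℕ → Ω → ℝ)
    (hmeas : ∀ i, Measurable (X i))
    (hindep : iIndepFun X P)
    (hident : ∀ i, IdentDistrib (X i) (X 0) P P)
    (hint : Integrable (X 0) P)
    (n : ℕ) (hn : 1 ≤ n) :
    (∫ ω, max 0 ((Finset.Icc 1 n).sup' (Finset.nonempty_Icc.mpr hn)
        (fun k => ∑ i ∈ Finset.range k, X i ω)) ∂P)
      = ∑ k ∈ Finset.Icc 1 n,
          (∫ ω, max (∑ i ∈ Finset.range k, X i ω) 0 ∂P) / (k : ℝ) := by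
  classical
  have claim : ∀ N : ℕ,
      (∫ ω, (Finset.range (N + 1)).sup' Finset.nonempty_range_add_one
        (fun k => ∑ i ∈ Finset.range k, X i ω) ∂P)
      = ∑ k ∈ Finset.Icc 1 N,
          (∫ ω, max (∑ i ∈ Finset.range k, X i ω) 0 ∂P) / (k : ℝ) := by
    intro N
    induction N with
    | zero =>
      have h0 : (fun ω => (Finset.range 1).sup' Finset.nonempty_range_add_one
          (fun k => ∑ i ∈ Finset.range k, X i ω)) = fun _ => (0 : ℝ) := by
        funext ω
        simp [Finset.range_one]
      rw [h0]
      simp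
    | succ N ih =>
      have hrec := SpitzerAux.recurrence (P := P) X hmeas hindep hident hint N
      have hins : Finset.Icc 1 (N + 1) = insert (N + 1) (Finset.Icc 1 N) := by
        ext k
        simp only [Finset.mem_Icc, Finset.mem_insert]
        omega
      exact hrec.trans (by rw [ih, hins, Finset.sum_insert (by simp)]; push_cast; ring)
  have hLHS : (fun ω => max 0 ((Finset.Icc 1 n).sup' (Finset.nonempty_Icc.mpr hn)
        (fun k => ∑ i ∈ Finset.range k, X i ω)))
      = fun ω => (Finset.range (n + 1)).sup' Finset.nonempty_range_add_one
        (fun k => ∑ i ∈ Finset.range k, X i ω) := by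
    funext ω
    have hins : Finset.range (n + 1) = insert 0 (Finset.Icc 1 n) := by
      ext k
      simp only [Finset.mem_range, Finset.mem_insert, Finset.mem_Icc]
      omega
    rw [Finset.sup'_congr Finset.nonempty_range_add_one hins (fun k _ => rfl),
      Finset.sup'_insert (Finset.nonempty_Icc.mpr hn)]
    simp
  rw [hLHS, claim n]
end

section
/- Suppose E‖Z_1‖ < ∞ and set μ = E[Z_1]. Then n^{-1} E[L_n] → 2‖μ‖ as n → ∞. -/
open MeasureTheory ProbabilityTheory Filter
open scoped RealInnerProductSpace

/-- The unit vector `(cos θ, sin θ)` in the plane. -/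
noncomputable def dir (θ : ℝ) : EuclideanSpace ℝ (Fin 2) :=
  (EuclideanSpace.equiv (Fin 2) ℝ).symm ![Real.cos θ, Real.sin θ]

/-- The random walk with increments `Z`: `walk Z n ω = Z 0 ω + ⋯ + Z (n-1) ω`. -/
noncomputable def walk {Ω : Type*} (Z : ℕ → Ω → EuclideanSpace ℝ (Fin 2)) (n : ℕ) (ω : Ω) :
    EuclideanSpace ℝ (Fin 2) :=
  ∑ i ∈ Finset.range n, Z i ω

/-- Perimeter length of the convex hull of `S 0, …, S n`, via Cauchy's formula. -/
noncomputable def perim {Ω : Type*} (Z : ℕ → Ω → EuclideanSpace ℝ (Fin 2)) (n : ℕ) (ω : Ω) : ℝ :=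
  ∫ θ in (0:ℝ)..Real.pi,
    (((Finset.range (n+1)).sup' Finset.nonempty_range_add_one
        (fun i => ⟪walk Z i ω, dir θ⟫))
      - ((Finset.range (n+1)).inf' Finset.nonempty_range_add_one
        (fun i => ⟪walk Z i ω, dir θ⟫)))

/-! ### Deterministic integral identities -/

lemma abs_cos_periodic : Function.Periodic (fun x => |Real.cos x|) Real.pi := by
  intro x; simp [Real.cos_add_pi]

lemma integral_abs_cos : ∫ θ in (0:ℝ)..Real.pi, |Real.cos θ| = 2 := by
  have h1 : ∫ θ in (0:ℝ)..(Real.pi/2), |Real.cos θ| = 1 := by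
    rw [intervalIntegral.integral_congr (g := Real.cos)]
    · rw [integral_cos]; simp
    · intro x hx
      rw [Set.uIcc_of_le (by positivity)] at hx
      exact abs_of_nonneg (Real.cos_nonneg_of_mem_Icc ⟨by linarith [hx.1, Real.pi_pos], hx.2⟩)
  have h2 : ∫ θ in (Real.pi/2)..Real.pi, |Real.cos θ| = 1 := by
    rw [intervalIntegral.integral_congr (g := fun x => -Real.cos x)]
    · rw [intervalIntegral.integral_neg, integral_cos]; simp
    · intro x hx
      rw [Set.uIcc_of_le (by linarith [Real.pi_pos])] at hx
      refine abs_of_nonpos (Real.cos_nonpos_of_pi_div_two_le_of_le hx.1 ?_)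
      linarith [hx.2, Real.pi_pos]
  rw [← intervalIntegral.integral_add_adjacent_intervals (b := Real.pi/2)
    ((Real.continuous_cos.abs).intervalIntegrable _ _)
    ((Real.continuous_cos.abs).intervalIntegrable _ _), h1, h2]
  norm_num

lemma integral_abs_cos_shift (φ : ℝ) : ∫ θ in (0:ℝ)..Real.pi, |Real.cos (θ - φ)| = 2 := by
  rw [intervalIntegral.integral_comp_sub_right (fun u => |Real.cos u|) φ]
  have := abs_cos_periodic.intervalIntegral_add_eq (0 - φ) 0
  simp only [zero_sub, zero_add] at this
  rw [show (0:ℝ) - φ = -φ by ring, show Real.pi - φ = -φ + Real.pi by ring, this]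
  exact integral_abs_cos

lemma integral_abs_lincomb (a b : ℝ) :
    ∫ θ in (0:ℝ)..Real.pi, |a * Real.cos θ + b * Real.sin θ| = 2 * Real.sqrt (a^2 + b^2) := by
  rcases eq_or_ne (Real.sqrt (a^2+b^2)) 0 with h | h
  · have ha : a = 0 := by nlinarith [Real.sq_sqrt (by positivity : (0:ℝ) ≤ a^2+b^2), sq_nonneg a, sq_nonneg b]
    have hb : b = 0 := by nlinarith [Real.sq_sqrt (by positivity : (0:ℝ) ≤ a^2+b^2), sq_nonneg a, sq_nonneg b]
    simp [ha, hb, h]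
  · set r := Real.sqrt (a^2+b^2) with hr
    have habs : ‖(⟨a, b⟩ : ℂ)‖ = r := by
      rw [Complex.norm_def, Complex.normSq_mk]; ring_nf; rfl
    have hz : (⟨a, b⟩ : ℂ) ≠ 0 := by
      intro hzz
      rw [hzz] at habs
      simp at habs
      exact h habs.symm
    set φ := Complex.arg ⟨a, b⟩ with hφ
    have hc : Real.cos φ = a / r := by rw [hφ, Complex.cos_arg hz, habs]
    have hs : Real.sin φ = b / r := by rw [hφ, Complex.sin_arg, habs]
    have hrpos : 0 < r := lt_of_le_of_ne (Real.sqrt_nonneg _) (Ne.symm h)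
    have key : ∀ θ, a * Real.cos θ + b * Real.sin θ = r * Real.cos (θ - φ) := by
      intro θ
      rw [Real.cos_sub, hc, hs]
      field_simp
    simp_rw [key, abs_mul, abs_of_pos hrpos]
    rw [intervalIntegral.integral_const_mul, integral_abs_cos_shift]
    ring

lemma norm_dir (θ : ℝ) : ‖dir θ‖ = 1 := by
  rw [EuclideanSpace.norm_eq]
  simp [Fin.sum_univ_two, dir]

lemma inner_dir (v : EuclideanSpace ℝ (Fin 2)) (θ : ℝ) :
    ⟪v, dir θ⟫ = v 0 * Real.cos θ + v 1 * Real.sin θ := by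
  simp [PiLp.inner_apply, Fin.sum_univ_two, dir, RCLike.inner_apply]
  ring

lemma continuous_dir : Continuous dir := by
  unfold dir
  exact (EuclideanSpace.equiv (Fin 2) ℝ).symm.continuous.comp
    (continuous_pi (fun i => by
      fin_cases i <;> simp <;> [exact Real.continuous_cos; exact Real.continuous_sin]))

lemma integral_abs_inner (v : EuclideanSpace ℝ (Fin 2)) :
    ∫ θ in (0:ℝ)..Real.pi, |⟪v, dir θ⟫| = 2 * ‖v‖ := by
  simp_rw [inner_dir]
  rw [integral_abs_lincomb, EuclideanSpace.norm_eq]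
  congr 2
  simp [Fin.sum_univ_two, sq_abs]

/-! ### Deterministic bounds on the perimeter -/

section Perim

variable {Ω : Type*} (Z : ℕ → Ω → EuclideanSpace ℝ (Fin 2))

lemma continuous_inner_walk (n : ℕ) (ω : Ω) :
    Continuous (fun θ => ⟪walk Z n ω, dir θ⟫) :=
  (continuous_const.inner continuous_dir)

lemma continuous_perim_integrand (n : ℕ) (ω : Ω) :
    Continuous (fun θ =>
      (((Finset.range (n+1)).sup' Finset.nonempty_range_add_one
        (fun i => ⟪walk Z i ω, dir θ⟫))
      - ((Finset.range (n+1)).inf' Finset.nonempty_range_add_one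
        (fun i => ⟪walk Z i ω, dir θ⟫)))) := by
  apply Continuous.sub
  · exact Continuous.finset_sup'_apply _ (fun i _ => continuous_inner_walk Z i ω)
  · exact Continuous.finset_inf'_apply _ (fun i _ => continuous_inner_walk Z i ω)

/-- maximal deviation of the walk from the line `i • μ`. -/
noncomputable def maxDev (μ : EuclideanSpace ℝ (Fin 2)) (n : ℕ) (ω : Ω) : ℝ :=
  (Finset.range (n+1)).sup' Finset.nonempty_range_add_one
    (fun i => ‖walk Z i ω - (i:ℝ) • μ‖)

lemma maxDev_nonneg (μ : EuclideanSpace ℝ (Fin 2)) (n : ℕ) (ω : Ω) :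
    0 ≤ maxDev Z μ n ω := by
  have h0 : (0:ℕ) ∈ Finset.range (n+1) := Finset.mem_range.2 (Nat.succ_pos n)
  unfold maxDev
  exact le_trans (norm_nonneg (walk Z 0 ω - ((0:ℕ):ℝ) • μ))
    (Finset.le_sup' (fun i => ‖walk Z i ω - (i:ℝ) • μ‖) h0)

lemma walk_zero (ω : Ω) : walk Z 0 ω = 0 := by simp [walk]

lemma perim_lower (n : ℕ) (ω : Ω) : 2 * ‖walk Z n ω‖ ≤ perim Z n ω := by
  rw [← integral_abs_inner (walk Z n ω)]
  apply intervalIntegral.integral_mono_on Real.pi_pos.le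
  · exact ((continuous_const.inner continuous_dir).abs).intervalIntegrable _ _
  · exact (continuous_perim_integrand Z n ω).intervalIntegrable _ _
  intro θ _
  have hn : n ∈ Finset.range (n+1) := Finset.self_mem_range_succ n
  have h0 : (0:ℕ) ∈ Finset.range (n+1) := Finset.mem_range.2 (Nat.succ_pos n)
  have f0 : ⟪walk Z 0 ω, dir θ⟫ = 0 := by rw [walk_zero]; simp
  have hs1 := Finset.le_sup' (fun i => ⟪walk Z i ω, dir θ⟫) hn
  have hs0 := Finset.le_sup' (fun i => ⟪walk Z i ω, dir θ⟫) h0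
  have hi1 := Finset.inf'_le (fun i => ⟪walk Z i ω, dir θ⟫) hn
  have hi0 := Finset.inf'_le (fun i => ⟪walk Z i ω, dir θ⟫) h0
  rw [abs_le]
  constructor <;> simp only [f0] at * <;> linarith

lemma perim_nonneg (n : ℕ) (ω : Ω) : 0 ≤ perim Z n ω :=
  le_trans (by positivity) (perim_lower Z n ω)

lemma perim_upper (μ : EuclideanSpace ℝ (Fin 2)) (n : ℕ) (ω : Ω) :
    perim Z n ω ≤ 2 * n * ‖μ‖ + 2 * Real.pi * maxDev Z μ n ω := by
  have key : ∀ θ : ℝ,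
      (((Finset.range (n+1)).sup' Finset.nonempty_range_add_one
        (fun i => ⟪walk Z i ω, dir θ⟫))
      - ((Finset.range (n+1)).inf' Finset.nonempty_range_add_one
        (fun i => ⟪walk Z i ω, dir θ⟫)))
      ≤ n * |⟪μ, dir θ⟫| + 2 * maxDev Z μ n ω := by
    intro θ
    obtain ⟨i, hi, hieq⟩ := Finset.exists_mem_eq_sup' (Finset.nonempty_range_add_one)
      (fun i => ⟪walk Z i ω, dir θ⟫)
    obtain ⟨j, hj, hjeq⟩ := Finset.exists_mem_eq_inf' (Finset.nonempty_range_add_one)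
      (fun i => ⟪walk Z i ω, dir θ⟫)
    rw [hieq, hjeq]
    have hdecomp : ∀ k : ℕ, ⟪walk Z k ω, dir θ⟫
        = ⟪walk Z k ω - (k:ℝ) • μ, dir θ⟫ + (k:ℝ) * ⟪μ, dir θ⟫ := by
      intro k
      rw [inner_sub_left, real_inner_smul_left]; ring
    rw [hdecomp i, hdecomp j]
    have hMi : |⟪walk Z i ω - (i:ℝ) • μ, dir θ⟫| ≤ maxDev Z μ n ω := by
      refine le_trans (le_trans (abs_real_inner_le_norm _ _) ?_) (Finset.le_sup' _ hi)
      rw [norm_dir]; simp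
    have hMj : |⟪walk Z j ω - (j:ℝ) • μ, dir θ⟫| ≤ maxDev Z μ n ω := by
      refine le_trans (le_trans (abs_real_inner_le_norm _ _) ?_) (Finset.le_sup' _ hj)
      rw [norm_dir]; simp
    have hin : (i:ℝ) ≤ n := by exact_mod_cast Nat.lt_succ_iff.1 (Finset.mem_range.1 hi)
    have hjn : (j:ℝ) ≤ n := by exact_mod_cast Nat.lt_succ_iff.1 (Finset.mem_range.1 hj)
    have hij : ((i:ℝ) - j) * ⟪μ, dir θ⟫ ≤ n * |⟪μ, dir θ⟫| := by
      calc ((i:ℝ) - j) * ⟪μ, dir θ⟫ ≤ |((i:ℝ) - j) * ⟪μ, dir θ⟫| := le_abs_self _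
      _ = |(i:ℝ) - j| * |⟪μ, dir θ⟫| := abs_mul _ _
      _ ≤ n * |⟪μ, dir θ⟫| := by
          apply mul_le_mul_of_nonneg_right _ (abs_nonneg _)
          rw [abs_le]
          constructor
          · have : (0:ℝ) ≤ i := Nat.cast_nonneg i
            linarith
          · have : (0:ℝ) ≤ j := Nat.cast_nonneg j
            linarith
    have h1 := abs_le.1 hMi
    have h2 := abs_le.1 hMj
    nlinarith [h1.1, h1.2, h2.1, h2.2]
  calc perim Z n ω ≤ ∫ θ in (0:ℝ)..Real.pi, (n * |⟪μ, dir θ⟫| + 2 * maxDev Z μ n ω) := by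
        apply intervalIntegral.integral_mono_on Real.pi_pos.le
        · exact (continuous_perim_integrand Z n ω).intervalIntegrable _ _
        · exact ((continuous_const.mul (continuous_const.inner continuous_dir).abs).add
            continuous_const).intervalIntegrable _ _
        · exact fun θ _ => key θ
  _ = n * (2 * ‖μ‖) + Real.pi * (2 * maxDev Z μ n ω) := by
        rw [intervalIntegral.integral_add, intervalIntegral.integral_const_mul,
          integral_abs_inner, intervalIntegral.integral_const]
        · simp
        · exact (continuous_const.mul (continuous_const.inner continuous_dir).abs).intervalIntegrable _ _
        · exact intervalIntegrable_const
  _ = 2 * n * ‖μ‖ + 2 * Real.pi * maxDev Z μ n ω := by ring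

end Perim

/-! ### A deterministic lemma: if `u i / i → 0` then `(max_{i ≤ n} u i) / n → 0`. -/

lemma sup_div_tendsto_zero {u : ℕ → ℝ} (hu : ∀ i, 0 ≤ u i)
    (h : Tendsto (fun i : ℕ => u i / i) atTop (nhds 0)) :
    Tendsto (fun n : ℕ =>
      ((Finset.range (n+1)).sup' Finset.nonempty_range_add_one u) / n) atTop (nhds 0) := by
  rw [Metric.tendsto_atTop] at h ⊢
  intro ε εpos
  obtain ⟨N₀, hN₀⟩ := h (ε/4) (by linarith)
  set N₁ := max N₀ 1 with hN₁
  set C := (Finset.range (N₁+1)).sup' Finset.nonempty_range_add_one u with hC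
  have hCnonneg : 0 ≤ C := le_trans (hu 0)
    (Finset.le_sup' u (Finset.mem_range.2 (Nat.succ_pos N₁)))
  have hkey : ∀ n : ℕ, ∀ i ∈ Finset.range (n+1), u i ≤ C + (ε/4) * n := by
    intro n i hi
    have hin : (i:ℝ) ≤ n := by exact_mod_cast Nat.lt_succ_iff.1 (Finset.mem_range.1 hi)
    by_cases hiN : i ≤ N₁
    · have : u i ≤ C := Finset.le_sup' u (Finset.mem_range.2 (Nat.lt_succ_of_le hiN))
      have : (0:ℝ) ≤ (ε/4) * n := by positivity
      linarith [Finset.le_sup' u (Finset.mem_range.2 (Nat.lt_succ_of_le hiN))]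
    · push_neg at hiN
      have hiN₀ : i ≥ N₀ := le_trans (le_max_left _ _) hiN.le
      have hipos : (0:ℝ) < i := by
        have : 1 ≤ i := le_trans (le_max_right _ _) hiN.le
        exact_mod_cast this
      have := hN₀ i hiN₀
      rw [Real.dist_eq, sub_zero, abs_of_nonneg (div_nonneg (hu i) hipos.le)] at this
      have hui : u i < (ε/4) * i := by
        rw [div_lt_iff₀ hipos] at this
        linarith
      nlinarith
  obtain ⟨N₂, hN₂⟩ := Metric.tendsto_atTop.1 (tendsto_const_div_atTop_nhds_zero_nat C) (ε/4)
    (by linarith)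
  refine ⟨max N₂ 1, fun n hn => ?_⟩
  have hn1 : 1 ≤ n := le_trans (le_max_right _ _) hn
  have hnpos : (0:ℝ) < n := by exact_mod_cast hn1
  have hsup : ((Finset.range (n+1)).sup' Finset.nonempty_range_add_one u) ≤ C + (ε/4) * n :=
    Finset.sup'_le _ _ (hkey n)
  have hsupnonneg : 0 ≤ (Finset.range (n+1)).sup' Finset.nonempty_range_add_one u :=
    le_trans (hu 0) (Finset.le_sup' u (Finset.mem_range.2 (Nat.succ_pos n)))
  rw [Real.dist_eq, sub_zero, abs_of_nonneg (by positivity)]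
  have h2 := hN₂ n (le_trans (le_max_left _ _) hn)
  rw [Real.dist_eq, sub_zero] at h2
  have hCn : C / n < ε/4 := lt_of_le_of_lt (le_abs_self _) h2
  calc ((Finset.range (n+1)).sup' Finset.nonempty_range_add_one u) / n
      ≤ (C + (ε/4) * n) / n := by gcongr
  _ = C / n + ε/4 := by
        rw [add_div, mul_div_assoc, div_self hnpos.ne', mul_one]
  _ < ε := by linarith

/-! ### The probabilistic part -/

section Main

variable {Ω : Type*} [MeasurableSpace Ω] (P : Measure Ω) [IsProbabilityMeasure P]
  (Z : ℕ → Ω → EuclideanSpace ℝ (Fin 2))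

lemma measurable_walk (hmeas : ∀ i, Measurable (Z i)) (n : ℕ) :
    Measurable (fun ω => walk Z n ω) := by
  unfold walk
  exact Finset.measurable_sum _ (fun i _ => hmeas i)

lemma measurable_maxDev (hmeas : ∀ i, Measurable (Z i)) (μ : EuclideanSpace ℝ (Fin 2)) (n : ℕ) :
    Measurable (fun ω => maxDev Z μ n ω) := by
  have heq : (fun ω => maxDev Z μ n ω)
      = (Finset.range (n+1)).sup' Finset.nonempty_range_add_one
          (fun i ω => ‖walk Z i ω - (i:ℝ) • μ‖) := by
    funext ω
    rw [Finset.sup'_apply]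
    rfl
  rw [heq]
  exact Finset.measurable_sup' _ (fun i _ =>
    ((measurable_walk Z hmeas i).sub measurable_const).norm)

lemma measurable_perim (hmeas : ∀ i, Measurable (Z i)) (n : ℕ) :
    Measurable (fun ω => perim Z n ω) := by
  have hG : Continuous (fun x : ℕ → EuclideanSpace ℝ (Fin 2) =>
      ∫ θ in (0:ℝ)..Real.pi,
        (((Finset.range (n+1)).sup' Finset.nonempty_range_add_one (fun i => ⟪x i, dir θ⟫))
          - ((Finset.range (n+1)).inf' Finset.nonempty_range_add_one (fun i => ⟪x i, dir θ⟫)))) := by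
    apply intervalIntegral.continuous_parametric_intervalIntegral_of_continuous'
    apply Continuous.sub
    · exact Continuous.finset_sup'_apply _ (fun i _ =>
        ((continuous_apply i).comp continuous_fst).inner (continuous_dir.comp continuous_snd))
    · exact Continuous.finset_inf'_apply _ (fun i _ =>
        ((continuous_apply i).comp continuous_fst).inner (continuous_dir.comp continuous_snd))
  have : (fun ω => perim Z n ω) = (fun x : ℕ → EuclideanSpace ℝ (Fin 2) =>
      ∫ θ in (0:ℝ)..Real.pi,
        (((Finset.range (n+1)).sup' Finset.nonempty_range_add_one (fun i => ⟪x i, dir θ⟫))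
          - ((Finset.range (n+1)).inf' Finset.nonempty_range_add_one (fun i => ⟪x i, dir θ⟫))))
      ∘ (fun ω i => walk Z i ω) := rfl
  rw [this]
  exact hG.measurable.comp (measurable_pi_lambda _ (fun i => measurable_walk Z hmeas i))


variable {P} {Z}

lemma integrable_Z (hmeas : ∀ i, Measurable (Z i))
    (hident : ∀ i, IdentDistrib (Z i) (Z 0) P P)
    (hint : Integrable (fun ω => ‖Z 0 ω‖) P) (i : ℕ) : Integrable (Z i) P :=
  (hident i).integrable_iff.2 ((integrable_norm_iff (hmeas 0).aestronglyMeasurable).1 hint)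

lemma integrable_walk (hmeas : ∀ i, Measurable (Z i))
    (hident : ∀ i, IdentDistrib (Z i) (Z 0) P P)
    (hint : Integrable (fun ω => ‖Z 0 ω‖) P) (n : ℕ) :
    Integrable (fun ω => walk Z n ω) P := by
  unfold walk
  exact integrable_finset_sum _ (fun i _ => integrable_Z hmeas hident hint i)

lemma integral_walk (hmeas : ∀ i, Measurable (Z i))
    (hident : ∀ i, IdentDistrib (Z i) (Z 0) P P)
    (hint : Integrable (fun ω => ‖Z 0 ω‖) P) (n : ℕ) :
    ∫ ω, walk Z n ω ∂P = (n:ℝ) • ∫ ω, Z 0 ω ∂P := by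
  unfold walk
  rw [integral_finset_sum _ (fun i _ => integrable_Z hmeas hident hint i)]
  have : ∀ i ∈ Finset.range n, ∫ ω, Z i ω ∂P = ∫ ω, Z 0 ω ∂P := fun i _ =>
    (hident i).integral_eq
  rw [Finset.sum_congr rfl this, Finset.sum_const, Finset.card_range]
  exact (Nat.cast_smul_eq_nsmul ℝ n _).symm

lemma maxDev_le (μ : EuclideanSpace ℝ (Fin 2)) (n : ℕ) (ω : Ω) :
    maxDev Z μ n ω ≤ (∑ j ∈ Finset.range n, ‖Z j ω‖) + n * ‖μ‖ := by
  apply Finset.sup'_le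
  intro i hi
  have hin : i ≤ n := Nat.lt_succ_iff.1 (Finset.mem_range.1 hi)
  calc ‖walk Z i ω - (i:ℝ) • μ‖ ≤ ‖walk Z i ω‖ + ‖(i:ℝ) • μ‖ := norm_sub_le _ _
  _ ≤ (∑ j ∈ Finset.range n, ‖Z j ω‖) + n * ‖μ‖ := by
      apply add_le_add
      · refine le_trans (norm_sum_le _ _) ?_
        apply Finset.sum_le_sum_of_subset_of_nonneg
        · exact Finset.range_subset_range.2 hin
        · exact fun j _ _ => norm_nonneg _
      · rw [norm_smul]
        simp only [Real.norm_natCast]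
        exact mul_le_mul_of_nonneg_right (by exact_mod_cast hin) (norm_nonneg _)

lemma integrable_maxDev (hmeas : ∀ i, Measurable (Z i))
    (hident : ∀ i, IdentDistrib (Z i) (Z 0) P P)
    (hint : Integrable (fun ω => ‖Z 0 ω‖) P) (μ : EuclideanSpace ℝ (Fin 2)) (n : ℕ) :
    Integrable (fun ω => maxDev Z μ n ω) P := by
  apply Integrable.mono'
    (g := fun ω => (∑ j ∈ Finset.range n, ‖Z j ω‖) + n * ‖μ‖)
  · exact (integrable_finset_sum _
      (fun j _ => (integrable_Z hmeas hident hint j).norm)).add (integrable_const _)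
  · exact (measurable_maxDev Z hmeas μ n).aestronglyMeasurable
  · refine Eventually.of_forall (fun ω => ?_)
    rw [Real.norm_eq_abs, abs_of_nonneg (maxDev_nonneg Z μ n ω)]
    exact maxDev_le μ n ω

lemma integrable_perim (hmeas : ∀ i, Measurable (Z i))
    (hident : ∀ i, IdentDistrib (Z i) (Z 0) P P)
    (hint : Integrable (fun ω => ‖Z 0 ω‖) P) (n : ℕ) :
    Integrable (fun ω => perim Z n ω) P := by
  apply Integrable.mono'
    (g := fun ω => 2 * (n:ℝ) * ‖(0 : EuclideanSpace ℝ (Fin 2))‖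
      + 2 * Real.pi * maxDev Z 0 n ω)
  · exact (integrable_const _).add
      ((integrable_maxDev hmeas hident hint 0 n).const_mul _)
  · exact (measurable_perim Z hmeas n).aestronglyMeasurable
  · refine Eventually.of_forall (fun ω => ?_)
    rw [Real.norm_eq_abs, abs_of_nonneg (perim_nonneg Z n ω)]
    exact perim_upper Z 0 n ω

lemma tendsto_integral_maxDev_div (hmeas : ∀ i, Measurable (Z i))
    (hindep : iIndepFun Z P)
    (hident : ∀ i, IdentDistrib (Z i) (Z 0) P P)
    (hint : Integrable (fun ω => ‖Z 0 ω‖) P) :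
    Tendsto (fun n : ℕ => ∫ ω, (maxDev Z (∫ ω', Z 0 ω' ∂P) n ω / n) ∂P) atTop (nhds 0) := by
  set μ0 := ∫ ω', Z 0 ω' ∂P with hμ0
  have hZint := integrable_Z hmeas hident hint
  -- a.e. convergence of `maxDev / n` to `0`
  have hae : ∀ᵐ ω ∂P, Tendsto (fun n : ℕ => maxDev Z μ0 n ω / n) atTop (nhds 0) := by
    have hslln := strong_law_ae Z (hZint 0)
      (fun i j hij => hindep.indepFun hij) hident
    filter_upwards [hslln] with ω hω
    have h1 : Tendsto (fun i : ℕ => ‖(i:ℝ)⁻¹ • walk Z i ω - μ0‖) atTop (nhds 0) :=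
      tendsto_iff_norm_sub_tendsto_zero.mp hω
    have hu : Tendsto (fun i : ℕ => ‖walk Z i ω - (i:ℝ) • μ0‖ / i) atTop (nhds 0) := by
      apply Tendsto.congr' _ h1
      filter_upwards [eventually_ge_atTop 1] with i hi
      have hipos : (0:ℝ) < i := by exact_mod_cast hi
      rw [show (i:ℝ)⁻¹ • walk Z i ω - μ0 = (i:ℝ)⁻¹ • (walk Z i ω - (i:ℝ) • μ0) by
        rw [smul_sub, smul_smul, inv_mul_cancel₀ hipos.ne', one_smul]]
      rw [norm_smul, Real.norm_eq_abs, abs_of_pos (by positivity), inv_mul_eq_div]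
    exact sup_div_tendsto_zero (fun i => norm_nonneg _) hu
  -- domination by an `L¹`-convergent sequence
  set g : ℕ → Ω → ℝ := fun n ω => (∑ j ∈ Finset.range n, ‖Z j ω‖) / n + ‖μ0‖ with hg
  have hdom : ∀ n ω, maxDev Z μ0 n ω / n ≤ g n ω := by
    intro n ω
    rcases Nat.eq_zero_or_pos n with rfl | hn
    · simp only [hg, Nat.cast_zero, div_zero, zero_add]
      positivity
    · have hnpos : (0:ℝ) < n := by exact_mod_cast hn
      have := maxDev_le (Z := Z) μ0 n ω
      calc maxDev Z μ0 n ω / n ≤ ((∑ j ∈ Finset.range n, ‖Z j ω‖) + n * ‖μ0‖) / n :=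
            (div_le_div_iff_of_pos_right hnpos).2 this
      _ = g n ω := by
            rw [add_div, mul_comm ((n:ℝ)) (‖μ0‖), mul_div_assoc, div_self hnpos.ne', mul_one]
  have hgint : ∀ n, Integrable (g n) P := fun n =>
    ((integrable_finset_sum _ (fun j _ => (hZint j).norm)).div_const _).add (integrable_const _)
  -- `L¹` convergence of `g`
  have hnormint : Integrable (fun ω => ‖Z 0 ω‖) P := hint
  have hLp := strong_law_Lp (μ := P) (le_refl (1:ENNReal)) (by norm_num)
    (fun j ω => ‖Z j ω‖) (memLp_one_iff_integrable.2 hnormint)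
    (fun i j hij => IndepFun.comp (hindep.indepFun hij) measurable_norm measurable_norm)
    (fun i => (hident i).comp measurable_norm)
  set c := ∫ ω, ‖Z 0 ω‖ ∂P with hc
  have hglim : Tendsto (fun n => eLpNorm (fun ω => g n ω - (c + ‖μ0‖)) 1 P) atTop (nhds 0) := by
    apply Tendsto.congr _ hLp
    intro n
    apply eLpNorm_congr_ae
    refine Eventually.of_forall (fun ω => ?_)
    simp only [hg, smul_eq_mul]
    rw [div_eq_inv_mul]
    ring_nf
  have hgUI : UnifIntegrable g 1 P :=
    unifIntegrable_of_tendsto_Lp le_rfl ENNReal.one_ne_top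
      (fun n => memLp_one_iff_integrable.2 (hgint n))
      (memLp_one_iff_integrable.2 (integrable_const _)) hglim
  set f : ℕ → Ω → ℝ := fun n ω => maxDev Z μ0 n ω / n with hf
  have hfmeas : ∀ n, AEStronglyMeasurable (f n) P := fun n =>
    ((measurable_maxDev Z hmeas μ0 n).div_const _).aestronglyMeasurable
  have hfnonneg : ∀ n ω, 0 ≤ f n ω := fun n ω =>
    div_nonneg (maxDev_nonneg Z μ0 n ω) (Nat.cast_nonneg n)
  have hfUI : UnifIntegrable f 1 P := by
    intro ε εpos
    obtain ⟨δ, δpos, hδ⟩ := hgUI εpos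
    refine ⟨δ, δpos, fun n s hs hμs => le_trans (eLpNorm_mono (fun ω => ?_)) (hδ n s hs hμs)⟩
    by_cases hω : ω ∈ s
    · rw [Set.indicator_of_mem hω, Set.indicator_of_mem hω, Real.norm_eq_abs,
        Real.norm_eq_abs, abs_of_nonneg (hfnonneg n ω)]
      exact le_trans (hdom n ω) (le_abs_self _)
    · simp [Set.indicator_of_notMem hω]
  have haez : ∀ᵐ ω ∂P, Tendsto (fun n => f n ω) atTop (nhds ((fun _ => (0:ℝ)) ω)) := by
    filter_upwards [hae] with ω hω
    simpa using hω
  have hvitali := tendsto_Lp_finite_of_tendsto_ae (μ := P) (p := 1) le_rfl ENNReal.one_ne_top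
    hfmeas (memLp_const (0:ℝ)) hfUI haez
  have hL1 : Tendsto (fun n => ∫⁻ ω, ‖f n ω - (0:ℝ)‖ₑ ∂P) atTop (nhds 0) := by
    apply Tendsto.congr _ hvitali
    intro n
    rw [← eLpNorm_one_eq_lintegral_enorm]
    rfl
  have := tendsto_integral_of_L1 (μ := P) (fun _ => (0:ℝ)) aestronglyMeasurable_const
    (Eventually.of_forall (fun n : ℕ =>
      (integrable_maxDev hmeas hident hint μ0 n).div_const _)) hL1
  simpa using this

end Main

/-- First-order asymptotics for the expected perimeter length:
`n⁻¹ E[L n] → 2‖μ‖` where `μ = E[Z 1]`. -/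
theorem expected_perimeter_asymptotics {Ω : Type*} [MeasurableSpace Ω]
    (P : Measure Ω) [IsProbabilityMeasure P]
    (Z : ℕ → Ω → EuclideanSpace ℝ (Fin 2))
    (hmeas : ∀ i, Measurable (Z i))
    (hindep : iIndepFun Z P)
    (hident : ∀ i, IdentDistrib (Z i) (Z 0) P P)
    (hint : Integrable (fun ω => ‖Z 0 ω‖) P) :
    Tendsto (fun n : ℕ => (∫ ω, perim Z n ω ∂P) / (n : ℝ)) atTop
      (nhds (2 * ‖∫ ω, Z 0 ω ∂P‖)) := by
  set μ0 := ∫ ω, Z 0 ω ∂P with hμ0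
  have hperimint := integrable_perim hmeas hident hint
  have hMint : ∀ n, Integrable (fun ω => maxDev Z μ0 n ω) P :=
    integrable_maxDev hmeas hident hint μ0
  have hMten := tendsto_integral_maxDev_div hmeas hindep hident hint
  have hlow : ∀ n : ℕ, 1 ≤ n → 2 * ‖μ0‖ ≤ (∫ ω, perim Z n ω ∂P) / n := by
    intro n hn
    have hnpos : (0:ℝ) < n := by exact_mod_cast hn
    rw [le_div_iff₀ hnpos]
    have h1 : ∫ ω, 2 * ‖walk Z n ω‖ ∂P ≤ ∫ ω, perim Z n ω ∂P :=
      integral_mono ((integrable_walk hmeas hident hint n).norm.const_mul 2)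
        (hperimint n) (fun ω => perim_lower Z n ω)
    have h2 : 2 * ‖∫ ω, walk Z n ω ∂P‖ ≤ ∫ ω, 2 * ‖walk Z n ω‖ ∂P := by
      rw [integral_const_mul]
      exact mul_le_mul_of_nonneg_left (norm_integral_le_integral_norm _) (by norm_num)
    have h3 : ‖∫ ω, walk Z n ω ∂P‖ = n * ‖μ0‖ := by
      rw [integral_walk hmeas hident hint n, norm_smul, Real.norm_natCast]
    rw [h3] at h2
    nlinarith
  have hup : ∀ n : ℕ, 1 ≤ n → (∫ ω, perim Z n ω ∂P) / n
      ≤ 2 * ‖μ0‖ + 2 * Real.pi * ∫ ω, maxDev Z μ0 n ω / n ∂P := by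
    intro n hn
    have hnpos : (0:ℝ) < n := by exact_mod_cast hn
    rw [div_le_iff₀ hnpos]
    have h1 : ∫ ω, perim Z n ω ∂P
        ≤ ∫ ω, (2 * n * ‖μ0‖ + 2 * Real.pi * maxDev Z μ0 n ω) ∂P :=
      integral_mono (hperimint n)
        ((integrable_const _).add ((hMint n).const_mul _))
        (fun ω => perim_upper Z μ0 n ω)
    have h2 : ∫ ω, (2 * n * ‖μ0‖ + 2 * Real.pi * maxDev Z μ0 n ω) ∂P
        = 2 * n * ‖μ0‖ + 2 * Real.pi * ∫ ω, maxDev Z μ0 n ω ∂P := by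
      rw [integral_add (integrable_const _) ((hMint n).const_mul _),
        integral_const, integral_const_mul]
      simp
    have h3 : ∫ ω, maxDev Z μ0 n ω / n ∂P = (∫ ω, maxDev Z μ0 n ω ∂P) / n :=
      integral_div _ _
    rw [h3]
    have h4 : (2 * ‖μ0‖ + 2 * Real.pi * ((∫ ω, maxDev Z μ0 n ω ∂P) / n)) * n
        = 2 * n * ‖μ0‖ + 2 * Real.pi * ∫ ω, maxDev Z μ0 n ω ∂P := by
      field_simp
    rw [h4]
    linarith
  have hupper_tendsto : Tendsto
      (fun n : ℕ => 2 * ‖μ0‖ + 2 * Real.pi * ∫ ω, maxDev Z μ0 n ω / n ∂P) atTop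
      (nhds (2 * ‖μ0‖)) := by
    have h := hMten.const_mul (2 * Real.pi)
    have h2 := (tendsto_const_nhds (x := 2 * ‖μ0‖) (f := atTop (α := ℕ))).add h
    simpa using h2
  refine tendsto_of_tendsto_of_tendsto_of_le_of_le' tendsto_const_nhds hupper_tendsto ?_ ?_
  · filter_upwards [eventually_ge_atTop 1] with n hn
    exact hlow n hn
  · filter_upwards [eventually_ge_atTop 1] with n hn
    exact hup n hn
end

section
/- Assume ‖Z_1‖ ≤ B almost surely for some constant B > 0. Then for every n ≥ 1 and every t > 0, P( |L_n − E[L_n]| > t ) ≤ 2 exp( − t² / (8 π² B² n) ). -/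
open MeasureTheory ProbabilityTheory Filter
open scoped RealInnerProductSpace

abbrev EE := EuclideanSpace ℝ (Fin 2)

noncomputable def wkF (n : ℕ) (x : Fin n → EE) (k : ℕ) : EE :=
  ∑ j ∈ Finset.range k, if h : j < n then x ⟨j, h⟩ else 0

noncomputable def DF (n : ℕ) (x : Fin n → EE) (θ : ℝ) : ℝ :=
  ((Finset.range (n+1)).sup' Finset.nonempty_range_add_one (fun i => ⟪wkF n x i, dir θ⟫))
  - ((Finset.range (n+1)).inf' Finset.nonempty_range_add_one (fun i => ⟪wkF n x i, dir θ⟫))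

noncomputable def FF (n : ℕ) (x : Fin n → EE) : ℝ := ∫ θ in (0:ℝ)..Real.pi, DF n x θ

lemma continuous_sup' {ι α : Type*} [TopologicalSpace α] (s : Finset ι) (H : s.Nonempty)
    (f : ι → α → ℝ) (hf : ∀ i, Continuous (f i)) :
    Continuous (fun θ => s.sup' H fun i => f i θ) := by
  induction H using Finset.Nonempty.cons_induction with
  | singleton a => simpa using hf a
  | cons a s ha hs ih =>
      have h2 : (fun θ => (Finset.cons a s ha).sup' (Finset.cons_nonempty ha) fun i => f i θ)
          = fun θ => max (f a θ) (s.sup' hs fun i => f i θ) := by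
        funext θ; rw [Finset.sup'_cons hs]
      rw [h2]
      exact (hf a).max ih

lemma continuous_inf' {ι α : Type*} [TopologicalSpace α] (s : Finset ι) (H : s.Nonempty)
    (f : ι → α → ℝ) (hf : ∀ i, Continuous (f i)) :
    Continuous (fun θ => s.inf' H fun i => f i θ) := by
  induction H using Finset.Nonempty.cons_induction with
  | singleton a => simpa using hf a
  | cons a s ha hs ih =>
      have h2 : (fun θ => (Finset.cons a s ha).inf' (Finset.cons_nonempty ha) fun i => f i θ)
          = fun θ => min (f a θ) (s.inf' hs fun i => f i θ) := by
        funext θ; rw [Finset.inf'_cons hs]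
      rw [h2]
      exact (hf a).min ih

lemma continuous_DF (n : ℕ) : Continuous (fun p : (Fin n → EE) × ℝ => DF n p.1 p.2) := by
  have hwk : ∀ k, Continuous (fun p : (Fin n → EE) × ℝ => wkF n p.1 k) := by
    intro k
    unfold wkF
    refine continuous_finset_sum _ fun j _ => ?_
    split
    · exact (continuous_apply _).comp continuous_fst
    · exact continuous_const
  have hinner : ∀ k, Continuous (fun p : (Fin n → EE) × ℝ => ⟪wkF n p.1 k, dir p.2⟫) := by
    intro k
    have h1 : Continuous (fun p : (Fin n → EE) × ℝ => dir p.2) :=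
      continuous_dir.comp continuous_snd
    exact (hwk k).inner h1
  unfold DF
  refine Continuous.sub ?_ ?_
  · refine continuous_sup' _ Finset.nonempty_range_add_one _ hinner
  · refine continuous_inf' _ Finset.nonempty_range_add_one _ hinner

lemma continuous_DF_theta (n : ℕ) (x : Fin n → EE) : Continuous (fun θ => DF n x θ) := by
  have h : Continuous (fun θ : ℝ => (fun p : (Fin n → EE) × ℝ => DF n p.1 p.2) (x, θ)) :=
    (continuous_DF n).comp (Continuous.prodMk_right x)
  simpa using h

lemma wkF_update (n : ℕ) (x : Fin n → EE) (i : Fin n) (v : EE) (k : ℕ) :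
    wkF n (Function.update x i v) k = wkF n x k + (if (i : ℕ) < k then v - x i else 0) := by
  unfold wkF
  have hterm : ∀ j ∈ Finset.range k,
      (if h : j < n then Function.update x i v ⟨j, h⟩ else 0)
        = (if h : j < n then x ⟨j, h⟩ else 0) + (if j = (i : ℕ) then v - x i else 0) := by
    intro j _
    by_cases hji : j = (i : ℕ)
    · have hj : j < n := hji ▸ i.isLt
      rw [dif_pos hj, dif_pos hj, if_pos hji]
      have he : (⟨j, hj⟩ : Fin n) = i := Fin.ext hji
      rw [he, Function.update_self]
      abel
    · rw [if_neg hji, add_zero]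
      by_cases hj : j < n
      · rw [dif_pos hj, dif_pos hj, Function.update_of_ne (fun h => hji (by
          simpa using congrArg Fin.val h))]
      · rw [dif_neg hj, dif_neg hj]
  rw [Finset.sum_congr rfl hterm, Finset.sum_add_distrib, Finset.sum_ite_eq' (Finset.range k) (i : ℕ)]
  simp [Finset.mem_range]

lemma sup'_shift (s : Finset ℕ) (H : s.Nonempty) (f τ : ℕ → ℝ) (σ : ℝ)
    (hτ : ∀ j ∈ s, τ j = 0 ∨ τ j = σ) :
    s.sup' H (fun j => f j + τ j) ≤ s.sup' H f + max σ 0 := by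
  refine Finset.sup'_le H _ fun j hj => ?_
  have h1 : f j ≤ s.sup' H f := Finset.le_sup' f hj
  have h2 : τ j ≤ max σ 0 := by rcases hτ j hj with h | h <;> rw [h] <;> simp [le_max_iff, le_refl]
  linarith

lemma inf'_shift (s : Finset ℕ) (H : s.Nonempty) (f τ : ℕ → ℝ) (σ : ℝ)
    (hτ : ∀ j ∈ s, τ j = 0 ∨ τ j = σ) :
    s.inf' H f + min σ 0 ≤ s.inf' H (fun j => f j + τ j) := by
  refine Finset.le_inf' H _ fun j hj => ?_
  have h1 : s.inf' H f ≤ f j := Finset.inf'_le f hj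
  have h2 : min σ 0 ≤ τ j := by rcases hτ j hj with h | h <;> rw [h] <;> simp [min_le_iff, le_refl]
  linarith

lemma DF_update_le (n : ℕ) (x : Fin n → EE) (i : Fin n) (v : EE) (θ : ℝ) :
    DF n (Function.update x i v) θ - DF n x θ ≤ |⟪v - x i, dir θ⟫| := by
  set σ : ℝ := ⟪v - x i, dir θ⟫ with hσ
  have hfun : ∀ k, ⟪wkF n (Function.update x i v) k, dir θ⟫
      = ⟪wkF n x k, dir θ⟫ + (if (i : ℕ) < k then σ else 0) := by
    intro k
    rw [wkF_update, inner_add_left]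
    congr 1
    by_cases h : (i : ℕ) < k
    · rw [if_pos h, if_pos h]
    · rw [if_neg h, if_neg h, inner_zero_left]
  have hτ : ∀ j ∈ Finset.range (n+1),
      (if (i : ℕ) < j then σ else 0) = 0 ∨ (if (i : ℕ) < j then σ else 0) = σ := by
    intro j _; by_cases h : (i : ℕ) < j <;> simp [h]
  have hsup := sup'_shift (Finset.range (n+1)) Finset.nonempty_range_add_one
    (fun k => ⟪wkF n x k, dir θ⟫) (fun j => if (i : ℕ) < j then σ else 0) σ hτ
  have hinf := inf'_shift (Finset.range (n+1)) Finset.nonempty_range_add_one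
    (fun k => ⟪wkF n x k, dir θ⟫) (fun j => if (i : ℕ) < j then σ else 0) σ hτ
  have hsup' : (Finset.range (n+1)).sup' Finset.nonempty_range_add_one
      (fun k => ⟪wkF n (Function.update x i v) k, dir θ⟫)
      ≤ (Finset.range (n+1)).sup' Finset.nonempty_range_add_one
        (fun k => ⟪wkF n x k, dir θ⟫) + max σ 0 := by
    refine le_trans (le_of_eq ?_) hsup
    exact Finset.sup'_congr _ rfl fun k _ => hfun k
  have hinf' : (Finset.range (n+1)).inf' Finset.nonempty_range_add_one
        (fun k => ⟪wkF n x k, dir θ⟫) + min σ 0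
      ≤ (Finset.range (n+1)).inf' Finset.nonempty_range_add_one
      (fun k => ⟪wkF n (Function.update x i v) k, dir θ⟫) := by
    refine le_trans hinf (le_of_eq ?_)
    exact Finset.inf'_congr _ rfl fun k _ => (hfun k).symm
  have habs : max σ 0 - min σ 0 = |σ| := by
    rcases le_or_gt 0 σ with h | h
    · rw [max_eq_left h, min_eq_right h, abs_of_nonneg h]; ring
    · rw [max_eq_right h.le, min_eq_left h.le, abs_of_neg h]; ring
  unfold DF
  linarith

lemma abs_DF_update (n : ℕ) (x : Fin n → EE) (i : Fin n) (v : EE) (θ : ℝ) :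
    |DF n (Function.update x i v) θ - DF n x θ| ≤ ‖v - x i‖ := by
  have h1 := DF_update_le n x i v θ
  have h2 := DF_update_le n (Function.update x i v) i (x i) θ
  rw [Function.update_idem, Function.update_eq_self] at h2
  have hv : Function.update x i v i = v := Function.update_self i v x
  rw [hv] at h2
  have hb : ∀ w : EE, |⟪w, dir θ⟫| ≤ ‖w‖ := by
    intro w
    calc |⟪w, dir θ⟫| ≤ ‖w‖ * ‖dir θ‖ := abs_real_inner_le_norm w (dir θ)
    _ = ‖w‖ := by rw [norm_dir, mul_one]
  have hb1 := hb (v - x i)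
  have hb2 := hb (x i - v)
  have : ‖x i - v‖ = ‖v - x i‖ := norm_sub_rev _ _
  rw [this] at hb2
  rw [abs_le]
  constructor <;> linarith [abs_nonneg (⟪v - x i, dir θ⟫ : ℝ), le_abs_self (⟪v - x i, dir θ⟫ : ℝ),
    neg_abs_le (⟪v - x i, dir θ⟫ : ℝ)]

lemma abs_FF_update (n : ℕ) (x : Fin n → EE) (i : Fin n) (v : EE) :
    |FF n (Function.update x i v) - FF n x| ≤ Real.pi * ‖v - x i‖ := by
  have hint1 : IntervalIntegrable (fun θ => DF n (Function.update x i v) θ) volume 0 Real.pi :=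
    (continuous_DF_theta n _).intervalIntegrable 0 Real.pi
  have hint2 : IntervalIntegrable (fun θ => DF n x θ) volume 0 Real.pi :=
    (continuous_DF_theta n x).intervalIntegrable 0 Real.pi
  have hsub : FF n (Function.update x i v) - FF n x
      = ∫ θ in (0:ℝ)..Real.pi, (DF n (Function.update x i v) θ - DF n x θ) := by
    unfold FF
    rw [intervalIntegral.integral_sub hint1 hint2]
  rw [hsub]
  have := intervalIntegral.norm_integral_le_of_norm_le_const
    (C := ‖v - x i‖) (f := fun θ => DF n (Function.update x i v) θ - DF n x θ)
    (a := 0) (b := Real.pi) (fun θ _ => by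
      rw [Real.norm_eq_abs]; exact abs_DF_update n x i v θ)
  rw [Real.norm_eq_abs] at this
  calc |∫ θ in (0:ℝ)..Real.pi, (DF n (Function.update x i v) θ - DF n x θ)|
      ≤ ‖v - x i‖ * |Real.pi - 0| := this
    _ = Real.pi * ‖v - x i‖ := by
        rw [sub_zero, abs_of_nonneg Real.pi_nonneg]; ring

lemma abs_DF_le (n : ℕ) (B : ℝ) (hB : 0 ≤ B) (x : Fin n → EE) (hx : ∀ j, ‖x j‖ ≤ B) (θ : ℝ) :
    |DF n x θ| ≤ 2 * n * B := by
  have hwk : ∀ k ∈ Finset.range (n+1), ‖wkF n x k‖ ≤ n * B := by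
    intro k hk
    unfold wkF
    calc ‖∑ j ∈ Finset.range k, if h : j < n then x ⟨j, h⟩ else 0‖
        ≤ ∑ j ∈ Finset.range k, ‖if h : j < n then x ⟨j, h⟩ else (0:EE)‖ := norm_sum_le _ _
      _ ≤ ∑ _j ∈ Finset.range k, B := by
          refine Finset.sum_le_sum fun j _ => ?_
          by_cases h : j < n
          · rw [dif_pos h]; exact hx _
          · rw [dif_neg h]; simpa using hB
      _ = k * B := by rw [Finset.sum_const, Finset.card_range, nsmul_eq_mul]
      _ ≤ n * B := by
          have : (k : ℝ) ≤ n := by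
            have := Finset.mem_range.mp hk
            exact_mod_cast Nat.lt_succ_iff.mp this
          exact mul_le_mul_of_nonneg_right this hB
  have hub : ∀ k ∈ Finset.range (n+1), |⟪wkF n x k, dir θ⟫| ≤ n * B := by
    intro k hk
    calc |⟪wkF n x k, dir θ⟫| ≤ ‖wkF n x k‖ * ‖dir θ‖ := abs_real_inner_le_norm _ _
      _ = ‖wkF n x k‖ := by rw [norm_dir, mul_one]
      _ ≤ n * B := hwk k hk
  have hsup : (Finset.range (n+1)).sup' Finset.nonempty_range_add_one
      (fun k => ⟪wkF n x k, dir θ⟫) ≤ n * B :=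
    Finset.sup'_le _ _ fun k hk => (abs_le.mp (hub k hk)).2
  have hinf : -(n * B) ≤ (Finset.range (n+1)).inf' Finset.nonempty_range_add_one
      (fun k => ⟪wkF n x k, dir θ⟫) :=
    Finset.le_inf' _ _ fun k hk => (abs_le.mp (hub k hk)).1
  have h0 : 0 ∈ Finset.range (n+1) := Finset.mem_range.mpr (Nat.succ_pos n)
  have hle : (Finset.range (n+1)).inf' Finset.nonempty_range_add_one
      (fun k => ⟪wkF n x k, dir θ⟫) ≤ (Finset.range (n+1)).sup' Finset.nonempty_range_add_one
      (fun k => ⟪wkF n x k, dir θ⟫) :=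
    le_trans (Finset.inf'_le _ h0) (Finset.le_sup' (fun k => (⟪wkF n x k, dir θ⟫ : ℝ)) h0)
  unfold DF
  rw [abs_le]
  constructor <;> linarith

lemma abs_FF_le (n : ℕ) (B : ℝ) (hB : 0 ≤ B) (x : Fin n → EE) (hx : ∀ j, ‖x j‖ ≤ B) :
    |FF n x| ≤ Real.pi * (2 * n * B) := by
  unfold FF
  have := intervalIntegral.norm_integral_le_of_norm_le_const
    (C := 2 * n * B) (f := fun θ => DF n x θ) (a := 0) (b := Real.pi) (fun θ _ => by
      rw [Real.norm_eq_abs]; exact abs_DF_le n B hB x hx θ)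
  rw [Real.norm_eq_abs, sub_zero, abs_of_nonneg Real.pi_nonneg] at this
  linarith

lemma integrable_of_bddM {α : Type*} [MeasurableSpace α] (μ : Measure α) [IsFiniteMeasure μ]
    (h : α → ℝ) (hm : AEStronglyMeasurable h μ) (C : ℝ) (hC : ∀ b, |h b| ≤ C) :
    Integrable h μ :=
  Integrable.mono' (integrable_const C) hm (ae_of_all _ fun b => by
    rw [Real.norm_eq_abs]; exact hC b)

lemma abs_integral_le_of_abs_le {α : Type*} [MeasurableSpace α] (μ : Measure α)
    [IsProbabilityMeasure μ] (h : α → ℝ) (hm : AEStronglyMeasurable h μ) (C : ℝ)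
    (hC : ∀ b, |h b| ≤ C) : |∫ a, h a ∂μ| ≤ C := by
  have hint : Integrable h μ := integrable_of_bddM μ h hm C hC
  calc |∫ a, h a ∂μ| ≤ ∫ a, |h a| ∂μ := by
        simpa [Real.norm_eq_abs] using norm_integral_le_integral_norm (μ := μ) h
    _ ≤ ∫ _a, C ∂μ := integral_mono hint.abs (integrable_const C) (fun a => hC a)
    _ = C := by simp

lemma hoeffding_lite {α : Type*} [MeasurableSpace α] (μ : Measure α) [IsProbabilityMeasure μ]
    (X : α → ℝ) (hX : AEStronglyMeasurable X μ) (c : ℝ) (hc : 0 < c) (hbd : ∀ a, |X a| ≤ c)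
    (hmean : ∫ a, X a ∂μ = 0) (l : ℝ) :
    ∫ a, Real.exp (l * X a) ∂μ ≤ Real.exp (l ^ 2 * c ^ 2 / 2) := by
  set A : ℝ := (Real.exp (-(l*c)) + Real.exp (l*c)) / 2 with hA
  set Bc : ℝ := (Real.exp (l*c) - Real.exp (-(l*c))) / (2*c) with hBc
  have hc' : c ≠ 0 := ne_of_gt hc
  have key : ∀ a, Real.exp (l * X a) ≤ A + X a * Bc := by
    intro a
    obtain ⟨hx1, hx2⟩ := abs_le.mp (hbd a)
    have ha' : (0:ℝ) ≤ (c - X a) / (2*c) := by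
      apply div_nonneg <;> linarith
    have hb' : (0:ℝ) ≤ (c + X a) / (2*c) := by
      apply div_nonneg <;> linarith
    have hab : (c - X a) / (2*c) + (c + X a) / (2*c) = 1 := by
      field_simp
      ring
    have hconv := convexOn_exp.2 (Set.mem_univ (-(l*c))) (Set.mem_univ (l*c)) ha' hb' hab
    simp only [smul_eq_mul] at hconv
    have harg : (c - X a) / (2*c) * (-(l*c)) + (c + X a) / (2*c) * (l*c) = l * X a := by
      field_simp
      ring
    rw [harg] at hconv
    refine le_trans hconv (le_of_eq ?_)
    rw [hA, hBc]
    field_simp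
    ring
  have hXint : Integrable X μ := integrable_of_bddM μ X hX c fun a => hbd a
  have hRHSint : Integrable (fun a => A + X a * Bc) μ :=
    (integrable_const A).add (hXint.mul_const Bc)
  have hexpm : AEStronglyMeasurable (fun a => Real.exp (l * X a)) μ :=
    Real.continuous_exp.comp_aestronglyMeasurable (hX.const_mul l)
  have hexpint : Integrable (fun a => Real.exp (l * X a)) μ := by
    refine integrable_of_bddM μ _ hexpm (Real.exp (|l| * c)) fun a => ?_
    rw [abs_of_nonneg (Real.exp_nonneg _)]
    apply Real.exp_le_exp.mpr
    calc l * X a ≤ |l * X a| := le_abs_self _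
      _ = |l| * |X a| := abs_mul _ _
      _ ≤ |l| * c := by
          exact mul_le_mul_of_nonneg_left (hbd a) (abs_nonneg l)
  calc ∫ a, Real.exp (l * X a) ∂μ ≤ ∫ a, (A + X a * Bc) ∂μ :=
        integral_mono hexpint hRHSint key
    _ = A + (∫ a, X a ∂μ) * Bc := by
        rw [integral_add (integrable_const A) (hXint.mul_const Bc), integral_const,
          integral_mul_const]
        simp
    _ = A := by rw [hmean]; ring
    _ = Real.cosh (l*c) := by rw [Real.cosh_eq]; ring
    _ ≤ Real.exp ((l*c)^2/2) := Real.cosh_le_exp_half_sq _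
    _ = Real.exp (l ^ 2 * c ^ 2 / 2) := by rw [mul_pow]

lemma insertNth_update {α : Type*} {n : ℕ} (i : Fin (n+1)) (a : α) (y : Fin n → α)
    (j : Fin n) (b : α) :
    i.insertNth a (Function.update y j b)
      = Function.update (i.insertNth a y : Fin (n+1) → α) (i.succAbove j) b := by
  funext k
  rcases eq_or_ne k (i.succAbove j) with rfl | hk
  · rw [Function.update_self, Fin.insertNth_apply_succAbove, Function.update_self]
  · rw [Function.update_of_ne hk]
    rcases eq_or_ne k i with rfl | hki
    · rw [Fin.insertNth_apply_same, Fin.insertNth_apply_same]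
    · obtain ⟨j', hj'⟩ := Fin.exists_succAbove_eq hki
      have hjj : j' ≠ j := fun h => hk (by rw [← hj', h])
      rw [← hj', Fin.insertNth_apply_succAbove, Fin.insertNth_apply_succAbove,
        Function.update_of_ne hjj]

lemma mcdiarmid_mgf {α : Type*} [MeasurableSpace α] :
    ∀ (n : ℕ) (μ : Fin n → Measure α), (∀ i, IsProbabilityMeasure (μ i)) →
    ∀ (f : (Fin n → α) → ℝ), Measurable f →
    ∀ (M : ℝ), (∀ x, |f x| ≤ M) →
    ∀ (c : ℝ), 0 < c →
    (∀ (x : Fin n → α) (i : Fin n) (a : α), |f (Function.update x i a) - f x| ≤ c) →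
    ∀ (l : ℝ),
      ∫ x, Real.exp (l * (f x - ∫ y, f y ∂(Measure.pi μ))) ∂(Measure.pi μ)
        ≤ Real.exp ((n : ℝ) * (l ^ 2 * c ^ 2 / 2)) := by
  intro n
  induction n with
  | zero =>
    intro μ hμ f hf M hM c hc hdiff l
    haveI : ∀ i, IsProbabilityMeasure (μ i) := hμ
    haveI : IsProbabilityMeasure (Measure.pi μ) := inferInstance
    have h1 : ∀ x : Fin 0 → α, f x = f (fun i => i.elim0) :=
      fun x => congrArg f (funext fun i => i.elim0)
    have hm : ∫ y, f y ∂(Measure.pi μ) = f (fun i => i.elim0) := by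
      rw [show f = fun _ => f (fun i => i.elim0) from funext h1, integral_const]
      simp
    rw [hm]
    have h2 : (fun x : Fin 0 → α => Real.exp (l * (f x - f (fun i => i.elim0)))) = fun _ => 1 := by
      funext x
      rw [h1 x]
      simp
    rw [h2, integral_const]
    simp
  | succ n ih =>
    intro μ hμ f hf M hM c hc hdiff l
    haveI : ∀ i, IsProbabilityMeasure (μ i) := hμ
    haveI : IsProbabilityMeasure (Measure.pi μ) := inferInstance
    set i₀ : Fin (n+1) := Fin.last n with hi₀
    set μ0 := μ i₀ with hμ0
    set ν := Measure.pi (fun j : Fin n => μ (i₀.succAbove j)) with hν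
    haveI : IsProbabilityMeasure ν := by rw [hν]; infer_instance
    haveI : IsProbabilityMeasure (μ0.prod ν) := by infer_instance
    set m := ∫ y, f y ∂(Measure.pi μ) with hm
    set e := MeasurableEquiv.piFinSuccAbove (fun _ : Fin (n+1) => α) i₀ with he
    have he_symm : ∀ p : α × (Fin n → α), e.symm p = i₀.insertNth p.1 p.2 := by
      intro p
      rw [he, MeasurableEquiv.piFinSuccAbove_symm_apply (fun _ : Fin (n+1) => α) i₀]
      funext j
      rw [Fin.insertNthEquiv_apply]
    have hins_meas : Measurable (fun p : α × (Fin n → α) => (i₀.insertNth p.1 p.2 : Fin (n+1) → α)) := by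
      rw [show (fun p : α × (Fin n → α) => (i₀.insertNth p.1 p.2 : Fin (n+1) → α)) = ⇑e.symm from
        (funext fun p => (he_symm p).symm)]
      exact e.symm.measurable
    have hMP : MeasurePreserving (⇑e) (Measure.pi μ) (μ0.prod ν) :=
      measurePreserving_piFinSuccAbove μ i₀
    have htrans : ∀ (G : (Fin (n+1) → α) → ℝ),
        ∫ x, G x ∂(Measure.pi μ) = ∫ p, G (i₀.insertNth p.1 p.2) ∂(μ0.prod ν) := by
      intro G
      have h := hMP.integral_comp e.measurableEmbedding (fun q => G (e.symm q))
      simp only [MeasurableEquiv.symm_apply_apply] at h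
      rw [h]
      refine integral_congr_ae (ae_of_all _ fun p => ?_)
      show G (e.symm p) = G (i₀.insertNth p.1 p.2)
      rw [he_symm]
    have hfu : Measurable (fun p : α × (Fin n → α) => f (i₀.insertNth p.1 p.2)) :=
      hf.comp hins_meas
    set g : (Fin n → α) → ℝ := fun y => ∫ a, f (i₀.insertNth a y) ∂μ0 with hg
    have hg_meas : Measurable g := by
      have h1 : StronglyMeasurable
          (Function.uncurry (fun (y : Fin n → α) (a : α) => f (i₀.insertNth a y))) := by
        have : Measurable (fun q : (Fin n → α) × α => f (i₀.insertNth q.2 q.1)) :=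
          hfu.comp measurable_swap
        exact this.stronglyMeasurable
      exact (h1.integral_prod_right).measurable
    have hfy_meas : ∀ y, Measurable (fun a => f (i₀.insertNth a y)) := fun y =>
      hfu.comp (measurable_id.prodMk measurable_const)
    have hfy_int : ∀ y, Integrable (fun a => f (i₀.insertNth a y)) μ0 := fun y =>
      integrable_of_bddM _ _ (hfy_meas y).aestronglyMeasurable M (fun a => hM _)
    have hg_bd : ∀ y, |g y| ≤ M := fun y =>
      abs_integral_le_of_abs_le μ0 _ (hfy_meas y).aestronglyMeasurable M (fun a => hM _)
    have hg_diff : ∀ (y : Fin n → α) (j : Fin n) (b : α),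
        |g (Function.update y j b) - g y| ≤ c := by
      intro y j b
      have hsub : g (Function.update y j b) - g y
          = ∫ a, (f (i₀.insertNth a (Function.update y j b)) - f (i₀.insertNth a y)) ∂μ0 :=
        (integral_sub (hfy_int _) (hfy_int y)).symm
      rw [hsub]
      refine abs_integral_le_of_abs_le μ0 _
        ((hfy_meas _).sub (hfy_meas y)).aestronglyMeasurable c fun a => ?_
      simp only [Pi.sub_apply]
      rw [insertNth_update]
      exact hdiff _ _ _
    have hmM : |m| ≤ M :=
      abs_integral_le_of_abs_le (Measure.pi μ) f hf.aestronglyMeasurable M hM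
    -- boundedness facts
    have habs2M : ∀ y a, |f (i₀.insertNth a y) - m| ≤ 2 * M := by
      intro y a
      calc |f (i₀.insertNth a y) - m| ≤ |f (i₀.insertNth a y)| + |m| := abs_sub _ _
        _ ≤ M + M := add_le_add (hM _) hmM
        _ = 2 * M := by ring
    have hexp_bd : ∀ y a, |Real.exp (l * (f (i₀.insertNth a y) - m))| ≤ Real.exp (|l| * (2*M)) := by
      intro y a
      rw [abs_of_nonneg (Real.exp_nonneg _)]
      apply Real.exp_le_exp.mpr
      calc l * (f (i₀.insertNth a y) - m) ≤ |l * (f (i₀.insertNth a y) - m)| := le_abs_self _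
        _ = |l| * |f (i₀.insertNth a y) - m| := abs_mul _ _
        _ ≤ |l| * (2*M) := mul_le_mul_of_nonneg_left (habs2M y a) (abs_nonneg l)
    have hFexp_meas : Measurable
        (fun p : α × (Fin n → α) => Real.exp (l * (f (i₀.insertNth p.1 p.2) - m))) :=
      (Real.measurable_exp.comp ((hfu.sub measurable_const).const_mul l))
    have hF_int : Integrable
        (fun p : α × (Fin n → α) => Real.exp (l * (f (i₀.insertNth p.1 p.2) - m))) (μ0.prod ν) :=
      integrable_of_bddM _ _ hFexp_meas.aestronglyMeasurable (Real.exp (|l| * (2*M)))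
        (fun p => hexp_bd p.2 p.1)
    -- per-y Hoeffding bound
    have hper_y : ∀ y, ∫ a, Real.exp (l * (f (i₀.insertNth a y) - m)) ∂μ0
        ≤ Real.exp (l * (g y - m)) * Real.exp (l ^ 2 * c ^ 2 / 2) := by
      intro y
      have hfac : ∀ a, Real.exp (l * (f (i₀.insertNth a y) - m))
          = Real.exp (l * (g y - m)) * Real.exp (l * (f (i₀.insertNth a y) - g y)) := by
        intro a
        rw [← Real.exp_add]
        congr 1
        ring
      have hXbd : ∀ a, |f (i₀.insertNth a y) - g y| ≤ c := by
        intro a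
        have hc2 : f (i₀.insertNth a y) - g y
            = ∫ b, (f (i₀.insertNth a y) - f (i₀.insertNth b y)) ∂μ0 := by
          rw [integral_sub (integrable_const _) (hfy_int y), integral_const]
          simp
          rfl
        rw [hc2]
        refine abs_integral_le_of_abs_le μ0 _
          ((measurable_const.sub (hfy_meas y)).aestronglyMeasurable) c fun b => ?_
        have hupd : (i₀.insertNth a y : Fin (n+1) → α)
            = Function.update (i₀.insertNth b y : Fin (n+1) → α) i₀ a :=
          ((Fin.update_insertNth (α := fun _ : Fin (n+1) => α) i₀ b a y).symm)
        rw [hupd]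
        exact hdiff _ _ _
      have hXmean : ∫ a, (f (i₀.insertNth a y) - g y) ∂μ0 = 0 := by
        rw [integral_sub (hfy_int y) (integrable_const _), integral_const]
        simp [hg]
      have hH := hoeffding_lite μ0 (fun a => f (i₀.insertNth a y) - g y)
        ((hfy_meas y).sub measurable_const).aestronglyMeasurable c hc hXbd hXmean l
      calc ∫ a, Real.exp (l * (f (i₀.insertNth a y) - m)) ∂μ0
          = ∫ a, Real.exp (l * (g y - m)) * Real.exp (l * (f (i₀.insertNth a y) - g y)) ∂μ0 := by
            refine integral_congr_ae (ae_of_all _ fun a => hfac a)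
        _ = Real.exp (l * (g y - m)) * ∫ a, Real.exp (l * (f (i₀.insertNth a y) - g y)) ∂μ0 := by
            rw [integral_const_mul]
        _ ≤ Real.exp (l * (g y - m)) * Real.exp (l ^ 2 * c ^ 2 / 2) :=
            mul_le_mul_of_nonneg_left hH (Real.exp_nonneg _)
    -- integrability for outer integral
    have hInner_meas : Measurable
        (fun y => ∫ a, Real.exp (l * (f (i₀.insertNth a y) - m)) ∂μ0) := by
      have h1 : StronglyMeasurable (Function.uncurry
          (fun (y : Fin n → α) (a : α) => Real.exp (l * (f (i₀.insertNth a y) - m)))) :=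
        (hFexp_meas.comp measurable_swap).stronglyMeasurable
      exact h1.integral_prod_right.measurable
    have hInner_bd : ∀ y, |∫ a, Real.exp (l * (f (i₀.insertNth a y) - m)) ∂μ0|
        ≤ Real.exp (|l| * (2*M)) := fun y =>
      abs_integral_le_of_abs_le μ0 _ ((hFexp_meas.comp
        (measurable_id.prodMk measurable_const)).aestronglyMeasurable) _ (fun a => hexp_bd y a)
    have hInner_int : Integrable
        (fun y => ∫ a, Real.exp (l * (f (i₀.insertNth a y) - m)) ∂μ0) ν :=
      integrable_of_bddM _ _ hInner_meas.aestronglyMeasurable _ hInner_bd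
    have hgexp_bd : ∀ y, |Real.exp (l * (g y - m)) * Real.exp (l ^ 2 * c ^ 2 / 2)|
        ≤ Real.exp (|l| * (2*M)) * Real.exp (l ^ 2 * c ^ 2 / 2) := by
      intro y
      rw [abs_mul, abs_of_nonneg (Real.exp_nonneg _), abs_of_nonneg (Real.exp_nonneg _)]
      refine mul_le_mul_of_nonneg_right ?_ (Real.exp_nonneg _)
      apply Real.exp_le_exp.mpr
      calc l * (g y - m) ≤ |l * (g y - m)| := le_abs_self _
        _ = |l| * |g y - m| := abs_mul _ _
        _ ≤ |l| * (2*M) := by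
            refine mul_le_mul_of_nonneg_left ?_ (abs_nonneg l)
            calc |g y - m| ≤ |g y| + |m| := abs_sub _ _
              _ ≤ M + M := add_le_add (hg_bd y) hmM
              _ = 2 * M := by ring
    have hgexp_meas : Measurable (fun y => Real.exp (l * (g y - m))) :=
      Real.measurable_exp.comp ((hg_meas.sub measurable_const).const_mul l)
    have hgexp_int : Integrable
        (fun y => Real.exp (l * (g y - m)) * Real.exp (l ^ 2 * c ^ 2 / 2)) ν :=
      integrable_of_bddM _ _ (hgexp_meas.mul_const _).aestronglyMeasurable _ hgexp_bd
    -- mean of g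
    have hgm : ∫ y, g y ∂ν = m := by
      have h1 : m = ∫ p, f (i₀.insertNth p.1 p.2) ∂(μ0.prod ν) := htrans f
      have h2 : Integrable (fun p : α × (Fin n → α) => f (i₀.insertNth p.1 p.2)) (μ0.prod ν) :=
        integrable_of_bddM _ _ hfu.aestronglyMeasurable M (fun p => hM _)
      rw [h1, integral_prod_symm _ h2]
    -- IH
    have hIH := ih (fun j => μ (i₀.succAbove j)) (fun j => hμ _) g hg_meas M hg_bd c hc hg_diff l
    rw [← hν, hgm] at hIH
    -- main chain
    calc ∫ x, Real.exp (l * (f x - m)) ∂(Measure.pi μ)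
        = ∫ p, Real.exp (l * (f (i₀.insertNth p.1 p.2) - m)) ∂(μ0.prod ν) :=
          htrans (fun x => Real.exp (l * (f x - m)))
      _ = ∫ y, ∫ a, Real.exp (l * (f (i₀.insertNth a y) - m)) ∂μ0 ∂ν :=
          integral_prod_symm _ hF_int
      _ ≤ ∫ y, Real.exp (l * (g y - m)) * Real.exp (l ^ 2 * c ^ 2 / 2) ∂ν :=
          integral_mono hInner_int hgexp_int hper_y
      _ = (∫ y, Real.exp (l * (g y - m)) ∂ν) * Real.exp (l ^ 2 * c ^ 2 / 2) := by
          rw [integral_mul_const]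
      _ ≤ Real.exp ((n : ℝ) * (l ^ 2 * c ^ 2 / 2)) * Real.exp (l ^ 2 * c ^ 2 / 2) :=
          mul_le_mul_of_nonneg_right hIH (Real.exp_nonneg _)
      _ = Real.exp (((n : ℕ) + 1 : ℝ) * (l ^ 2 * c ^ 2 / 2)) := by
          rw [← Real.exp_add]
          congr 1
          ring
      _ = Real.exp (((n + 1 : ℕ) : ℝ) * (l ^ 2 * c ^ 2 / 2)) := by
          push_cast
          ring_nf

lemma tail_bound {α : Type*} [MeasurableSpace α] (ν : Measure α) [IsProbabilityMeasure ν]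
    (f : α → ℝ) (hf : Measurable f) (M : ℝ) (hM : ∀ x, |f x| ≤ M)
    (K : ℝ) (hK : 0 < K)
    (hmgf : ∀ l : ℝ, ∫ x, Real.exp (l * (f x - ∫ y, f y ∂ν)) ∂ν ≤ Real.exp (K * l ^ 2 / 2))
    (t : ℝ) (ht : 0 < t) :
    ν {x | t < |f x - ∫ y, f y ∂ν|} ≤ ENNReal.ofReal (2 * Real.exp (-(t^2) / (2*K))) := by
  set m := ∫ y, f y ∂ν with hm
  set g : α → ℝ := fun x => f x - m with hgdef
  set l := t / K with hl
  have hl0 : 0 ≤ l := le_of_lt (div_pos ht hK)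
  have hgmeas : Measurable g := hf.sub measurable_const
  have hgexp : ∀ s : ℝ, Integrable (fun x => Real.exp (s * g x)) ν := by
    intro s
    refine integrable_of_bddM ν _ ((Real.measurable_exp.comp (hgmeas.const_mul s)).aestronglyMeasurable)
      (Real.exp (|s| * (M + |m|))) fun x => ?_
    rw [abs_of_nonneg (Real.exp_nonneg _)]
    apply Real.exp_le_exp.mpr
    calc s * g x ≤ |s * g x| := le_abs_self _
      _ = |s| * |g x| := abs_mul _ _
      _ ≤ |s| * (M + |m|) := by
          refine mul_le_mul_of_nonneg_left ?_ (abs_nonneg s)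
          calc |g x| ≤ |f x| + |m| := abs_sub _ _
            _ ≤ M + |m| := add_le_add (hM x) le_rfl
  have hmgf' : ∀ s : ℝ, mgf g ν s ≤ Real.exp (K * s ^ 2 / 2) := by
    intro s
    have : mgf g ν s = ∫ x, Real.exp (s * g x) ∂ν := rfl
    rw [this]
    exact hmgf s
  have hexpo : Real.exp (-l * t) * Real.exp (K * l ^ 2 / 2) = Real.exp (-(t^2) / (2*K)) := by
    rw [← Real.exp_add]
    congr 1
    rw [hl]
    field_simp
    ring
  have h1 : (ν {x | t ≤ g x}).toReal ≤ Real.exp (-(t^2) / (2*K)) := by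
    have := measure_ge_le_exp_mul_mgf (X := g) (μ := ν) (t := l) t hl0 (hgexp l)
    refine le_trans this ?_
    rw [← hexpo]
    exact mul_le_mul_of_nonneg_left (hmgf' l) (Real.exp_nonneg _)
  have h2 : (ν {x | g x ≤ -t}).toReal ≤ Real.exp (-(t^2) / (2*K)) := by
    have := measure_le_le_exp_mul_mgf (X := g) (μ := ν) (t := -l) (-t)
      (neg_nonpos.mpr hl0) (hgexp (-l))
    refine le_trans this ?_
    have hre : -(-l) * (-t) = -l * t := by ring
    rw [hre, ← hexpo]
    refine mul_le_mul_of_nonneg_left ?_ (Real.exp_nonneg _)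
    have := hmgf' (-l)
    calc mgf g ν (-l) ≤ Real.exp (K * (-l) ^ 2 / 2) := this
      _ = Real.exp (K * l ^ 2 / 2) := by rw [neg_pow]; ring_nf
  have hsub : {x | t < |g x|} ⊆ {x | t ≤ g x} ∪ {x | g x ≤ -t} := by
    intro x hx
    simp only [Set.mem_setOf_eq] at hx
    rcases abs_cases (g x) with ⟨h, _⟩ | ⟨h, _⟩
    · left; exact le_of_lt (h ▸ hx)
    · right
      simp only [Set.mem_setOf_eq]
      linarith [hx.le, h]
  calc ν {x | t < |g x|} ≤ ν ({x | t ≤ g x} ∪ {x | g x ≤ -t}) := measure_mono hsub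
    _ ≤ ν {x | t ≤ g x} + ν {x | g x ≤ -t} := measure_union_le _ _
    _ ≤ ENNReal.ofReal (Real.exp (-(t^2) / (2*K))) + ENNReal.ofReal (Real.exp (-(t^2) / (2*K))) := by
        refine add_le_add ?_ ?_
        · rw [← ENNReal.ofReal_toReal (measure_ne_top ν _)]
          exact ENNReal.ofReal_le_ofReal h1
        · rw [← ENNReal.ofReal_toReal (measure_ne_top ν _)]
          exact ENNReal.ofReal_le_ofReal h2
    _ = ENNReal.ofReal (2 * Real.exp (-(t^2) / (2*K))) := by
        rw [← ENNReal.ofReal_add (Real.exp_nonneg _) (Real.exp_nonneg _)]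
        congr 1
        ring

lemma map_eq_pi {Ω : Type*} [MeasurableSpace Ω] (P : Measure Ω) [IsProbabilityMeasure P]
    {α : Type*} [MeasurableSpace α]
    (Z : ℕ → Ω → α) (hmeas : ∀ i, Measurable (Z i))
    (hindep : iIndepFun Z P) (n : ℕ) :
    P.map (fun ω (i : Fin n) => Z i ω) = Measure.pi (fun i : Fin n => P.map (Z i)) := by
  have hφ : Measurable (fun ω (i : Fin n) => Z i ω) :=
    measurable_pi_lambda _ fun i => hmeas i
  refine (Measure.pi_eq fun s hs => ?_).symm
  rw [Measure.map_apply hφ (MeasurableSet.univ_pi hs)]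
  set S : ℕ → Set α := fun j => if h : j < n then s ⟨j, h⟩ else Set.univ with hS
  have hSmeas : ∀ j ∈ Finset.range n, MeasurableSet (S j) := by
    intro j hj
    rw [Finset.mem_range] at hj
    simp only [hS, dif_pos hj]
    exact hs _
  have hpre : (fun ω (i : Fin n) => Z i ω) ⁻¹' (Set.univ.pi s)
      = ⋂ j ∈ Finset.range n, Z j ⁻¹' (S j) := by
    ext ω
    simp only [Set.mem_preimage, Set.mem_univ_pi, Set.mem_iInter, Finset.mem_range]
    constructor
    · intro h j hj
      simp only [hS, Set.mem_preimage, dif_pos hj]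
      exact h ⟨j, hj⟩
    · intro h i
      have := h (i : ℕ) i.isLt
      simp only [hS, Set.mem_preimage, dif_pos i.isLt] at this
      simpa using this
  rw [hpre, hindep.measure_inter_preimage_eq_mul (Finset.range n) hSmeas]
  rw [← Fin.prod_univ_eq_prod_range (fun j => P (Z j ⁻¹' S j)) n]
  refine Finset.prod_congr rfl fun i _ => ?_
  rw [Measure.map_apply (hmeas i) (hs i)]
  congr 1
  simp only [hS, dif_pos i.isLt]


lemma measurable_FF (n : ℕ) : Measurable (FF n) := by
  have hFFeq : FF n = fun x => ∫ θ in Set.Ioc (0:ℝ) Real.pi, DF n x θ :=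
    funext fun x => intervalIntegral.integral_of_le Real.pi_nonneg
  rw [hFFeq]
  have h1 : StronglyMeasurable (Function.uncurry (fun (x : Fin n → EE) (θ : ℝ) => DF n x θ)) :=
    (continuous_DF n).measurable.stronglyMeasurable
  exact h1.integral_prod_right.measurable

lemma FF_eq_perim {Ω : Type*} (Z : ℕ → Ω → EuclideanSpace ℝ (Fin 2)) (n : ℕ) (ω : Ω) :
    FF n (fun j : Fin n => Z j ω) = perim Z n ω := by
  have hw : ∀ k, k < n + 1 → wkF n (fun j : Fin n => Z j ω) k = walk Z k ω := by
    intro k hk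
    unfold wkF walk
    refine Finset.sum_congr rfl fun j hj => ?_
    have hjn : j < n := Nat.lt_of_lt_of_le (Finset.mem_range.mp hj) (Nat.lt_succ_iff.mp hk)
    rw [dif_pos hjn]
  unfold FF perim
  refine intervalIntegral.integral_congr fun θ _ => ?_
  unfold DF
  congr 1
  · exact Finset.sup'_congr _ rfl fun k hk => by rw [hw k (Finset.mem_range.mp hk)]
  · exact Finset.inf'_congr _ rfl fun k hk => by rw [hw k (Finset.mem_range.mp hk)]

noncomputable def clampB (B : ℝ) (v : EE) : EE := if ‖v‖ ≤ B then v else 0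

lemma measurable_clampB (B : ℝ) : Measurable (clampB B) := by
  unfold clampB
  exact Measurable.ite (measurableSet_le measurable_norm measurable_const)
    measurable_id measurable_const

lemma norm_clampB (B : ℝ) (hB : 0 ≤ B) (v : EE) : ‖clampB B v‖ ≤ B := by
  unfold clampB
  split
  · assumption
  · simpa using hB

lemma clampB_eq (B : ℝ) (v : EE) (hv : ‖v‖ ≤ B) : clampB B v = v := if_pos hv

/-- Azuma–Hoeffding concentration for the perimeter length of the convex hull of a
random walk with bounded increments. -/
theorem perimeter_concentration {Ω : Type*} [MeasurableSpace Ω]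
    (P : Measure Ω) [IsProbabilityMeasure P]
    (Z : ℕ → Ω → EuclideanSpace ℝ (Fin 2))
    (hmeas : ∀ i, Measurable (Z i))
    (hindep : iIndepFun Z P)
    (hident : ∀ i, IdentDistrib (Z i) (Z 0) P P)
    (B : ℝ) (hB : 0 < B)
    (hbound : ∀ᵐ ω ∂P, ‖Z 0 ω‖ ≤ B)
    (n : ℕ) (hn : 1 ≤ n) (t : ℝ) (ht : 0 < t) :
    P {ω | t < |perim Z n ω - ∫ ω', perim Z n ω' ∂P|}
      ≤ ENNReal.ofReal (2 * Real.exp (-(t ^ 2) / (8 * Real.pi ^ 2 * B ^ 2 * n))) := by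
  classical
  set f : (Fin n → EE) → ℝ := fun x => FF n (fun j => clampB B (x j)) with hfdef
  have hf : Measurable f := (measurable_FF n).comp
    (measurable_pi_lambda _ fun j => (measurable_clampB B).comp (measurable_pi_apply j))
  set c : ℝ := 2 * Real.pi * B with hcdef
  have hc : 0 < c := by positivity
  set M : ℝ := Real.pi * (2 * n * B) with hMdef
  have hM : ∀ x, |f x| ≤ M :=
    fun x => abs_FF_le n B hB.le _ (fun j => norm_clampB B hB.le _)
  have hdiff : ∀ (x : Fin n → EE) (i : Fin n) (a : EE),
      |f (Function.update x i a) - f x| ≤ c := by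
    intro x i a
    have h1 : (fun j => clampB B (Function.update x i a j))
        = Function.update (fun j => clampB B (x j)) i (clampB B a) := by
      funext j
      rcases eq_or_ne j i with rfl | h
      · simp
      · rw [Function.update_of_ne h, Function.update_of_ne h]
    have h2 : |f (Function.update x i a) - f x| ≤ Real.pi * ‖clampB B a - clampB B (x i)‖ := by
      rw [hfdef]
      simp only []
      rw [h1]
      exact abs_FF_update n (fun j => clampB B (x j)) i (clampB B a)
    refine le_trans h2 ?_
    have h3 : ‖clampB B a - clampB B (x i)‖ ≤ 2 * B := by
      calc ‖clampB B a - clampB B (x i)‖ ≤ ‖clampB B a‖ + ‖clampB B (x i)‖ := norm_sub_le _ _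
        _ ≤ B + B := add_le_add (norm_clampB B hB.le _) (norm_clampB B hB.le _)
        _ = 2 * B := by ring
    calc Real.pi * ‖clampB B a - clampB B (x i)‖ ≤ Real.pi * (2 * B) :=
          mul_le_mul_of_nonneg_left h3 Real.pi_nonneg
      _ = c := by rw [hcdef]; ring
  -- the product law
  haveI : ∀ i : Fin n, IsProbabilityMeasure (P.map (Z (i : ℕ))) :=
    fun i => Measure.isProbabilityMeasure_map (hmeas _).aemeasurable
  set ν : Measure (Fin n → EE) := Measure.pi (fun i : Fin n => P.map (Z i)) with hνdef
  haveI : IsProbabilityMeasure ν := by rw [hνdef]; infer_instance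
  have hmap : P.map (fun ω (i : Fin n) => Z i ω) = ν := map_eq_pi P Z hmeas hindep n
  have hφ : Measurable (fun ω (i : Fin n) => Z i ω) :=
    measurable_pi_lambda _ fun i => hmeas i
  -- mgf bound
  have hK : (0:ℝ) < n * c ^ 2 := by
    have hn' : (0:ℝ) < n := by exact_mod_cast hn
    positivity
  have hmgf : ∀ l : ℝ, ∫ x, Real.exp (l * (f x - ∫ y, f y ∂ν)) ∂ν
      ≤ Real.exp ((n * c ^ 2) * l ^ 2 / 2) := by
    intro l
    have := mcdiarmid_mgf n (fun i : Fin n => P.map (Z i)) (fun i => inferInstance)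
      f hf M hM c hc hdiff l
    rw [← hνdef] at this
    refine le_trans this (le_of_eq ?_)
    congr 1
    ring
  have htail := tail_bound ν f hf M hM (n * c ^ 2) hK hmgf t ht
  -- transfer to Ω
  have hZb : ∀ i : ℕ, ∀ᵐ ω ∂P, ‖Z i ω‖ ≤ B := by
    intro i
    have hsm : MeasurableSet {v : EE | ¬ ‖v‖ ≤ B} :=
      (measurableSet_le measurable_norm measurable_const).compl
    rw [ae_iff]
    have h0 : P {ω | ¬ ‖Z 0 ω‖ ≤ B} = 0 := by
      rw [← ae_iff]; exact hbound
    have heq : {ω | ¬ ‖Z i ω‖ ≤ B} = Z i ⁻¹' {v : EE | ¬ ‖v‖ ≤ B} := rfl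
    have heq0 : {ω | ¬ ‖Z 0 ω‖ ≤ B} = Z 0 ⁻¹' {v : EE | ¬ ‖v‖ ≤ B} := rfl
    rw [heq, ← Measure.map_apply (hmeas i) hsm, (hident i).map_eq,
      Measure.map_apply (hmeas 0) hsm, ← heq0, h0]
  have hAE : ∀ᵐ ω ∂P, ∀ i : Fin n, ‖Z (i:ℕ) ω‖ ≤ B := ae_all_iff.mpr fun i => hZb i
  have hfZ : ∀ᵐ ω ∂P, f (fun i : Fin n => Z i ω) = perim Z n ω := by
    filter_upwards [hAE] with ω hω
    have h1 : (fun j : Fin n => clampB B (Z (j:ℕ) ω)) = fun j : Fin n => Z (j:ℕ) ω :=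
      funext fun j => clampB_eq B _ (hω j)
    rw [hfdef]
    simp only []
    rw [h1, FF_eq_perim]
  set m' := ∫ y, f y ∂ν with hm'
  have hm_eq : m' = ∫ ω', perim Z n ω' ∂P := by
    rw [hm', ← hmap, integral_map hφ.aemeasurable hf.aestronglyMeasurable]
    exact integral_congr_ae hfZ
  have hSmeas : MeasurableSet {x : Fin n → EE | t < |f x - m'|} :=
    measurableSet_lt measurable_const ((hf.sub measurable_const).abs)
  have hsetP : P {ω | t < |perim Z n ω - ∫ ω', perim Z n ω' ∂P|}
      = ν {x | t < |f x - m'|} := by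
    have hae : {ω | t < |perim Z n ω - ∫ ω', perim Z n ω' ∂P|}
        =ᵐ[P] (fun ω (i : Fin n) => Z i ω) ⁻¹' {x | t < |f x - m'|} := by
      rw [Filter.eventuallyEq_set]
      filter_upwards [hfZ] with ω hω
      simp only [Set.mem_setOf_eq, Set.mem_preimage, hω, hm_eq]
    rw [measure_congr hae, ← Measure.map_apply hφ hSmeas, hmap]
  have hden : 2 * ((n:ℝ) * c ^ 2) = 8 * Real.pi ^ 2 * B ^ 2 * n := by
    rw [hcdef]; ring
  rw [hsetP, ← hden]
  exact htail
end
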